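/- arXiv:2403.10400 — 6 statements merged into one kernel-verified Lean document; each statement's English description precedes it below -/
import Mathlib

section
/- For any multi-index α ∈ ℕ_0^d and any homogeneous polynomial f_m of degree m on ℂ^d, one has ‖f_m‖_a ≤ ‖z^α f_m‖_a ≤ C_{α,m} ‖f_m‖_a, where C_{α,m} = sup over multi-indices β with |β| = m of sqrt((α+β)!/β!). Moreover C_{α,m} is the smallest constant for which the upper bound holds over all homogeneous polynomials of degree m. -/
open MvPolynomial Finset

/-- Multi-index factorial `α! = α₁! ⋯ α_d!`. -/
def mfact {d : ℕ} (α : Fin d →₀ ℕ) : ℕ := ∏ i, (α i).factorial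

/-- The apolar (Fischer/Bombieri) inner product `⟨P,Q⟩_a = Σ_α α! c_α conj(d_α)`. -/
noncomputable def apolar {d : ℕ} (P Q : MvPolynomial (Fin d) ℂ) : ℂ :=
  ∑ α ∈ P.support ∪ Q.support, (mfact α : ℂ) * P.coeff α * (starRingEnd ℂ) (Q.coeff α)

/-- The squared apolar norm. -/
noncomputable def apolarNormSq {d : ℕ} (P : MvPolynomial (Fin d) ℂ) : ℝ :=
  ∑ α ∈ P.support, (mfact α : ℝ) * ‖P.coeff α‖ ^ 2

/-- The apolar norm. -/
noncomputable def apolarNorm {d : ℕ} (P : MvPolynomial (Fin d) ℂ) : ℝ :=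
  Real.sqrt (apolarNormSq P)

/-- The mixed partial derivative `D^α = ∂^{α₁}_1 ⋯ ∂^{α_d}_d` as a linear endomorphism. -/
noncomputable def Dmulti {d : ℕ} (α : Fin d →₀ ℕ) :
    Module.End ℂ (MvPolynomial (Fin d) ℂ) :=
  (List.ofFn fun i : Fin d =>
    ((MvPolynomial.pderiv i).toLinearMap : Module.End ℂ (MvPolynomial (Fin d) ℂ)) ^ α i).prod

/-- The differential operator `Q*(D)`: conjugate the coefficients of `Q` and replace
each variable by the corresponding partial derivative. -/
noncomputable def Dop {d : ℕ} (Q : MvPolynomial (Fin d) ℂ) :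
    Module.End ℂ (MvPolynomial (Fin d) ℂ) :=
  ∑ α ∈ Q.support, (starRingEnd ℂ) (Q.coeff α) • Dmulti α

section aux
variable {d : ℕ}

lemma mfact_pos (α : Fin d →₀ ℕ) : 0 < mfact α :=
  Finset.prod_pos fun i _ => Nat.factorial_pos _

lemma mfact_le (α β : Fin d →₀ ℕ) : mfact β ≤ mfact (α + β) :=
  Finset.prod_le_prod' fun i _ => Nat.factorial_le (by simp)

lemma support_mono_mul (α : Fin d →₀ ℕ) (f : MvPolynomial (Fin d) ℂ) :
    (monomial α (1:ℂ) * f).support = f.support.map (addLeftEmbedding α) := by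
  ext γ
  simp only [mem_support_iff, Finset.mem_map, addLeftEmbedding_apply, mem_support_iff]
  rw [coeff_monomial_mul']
  constructor
  · intro h
    split_ifs at h with hle
    · exact ⟨γ - α, by simpa using h, by rw [add_tsub_cancel_of_le hle]⟩
    · simp at h
  · rintro ⟨β, hβ, rfl⟩
    rw [if_pos le_self_add, add_tsub_cancel_left]
    simpa using hβ

lemma apolarNormSq_mono_mul (α : Fin d →₀ ℕ) (f : MvPolynomial (Fin d) ℂ) :
    apolarNormSq (monomial α (1:ℂ) * f) =
      ∑ β ∈ f.support, (mfact (α + β) : ℝ) * ‖f.coeff β‖ ^ 2 := by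
  rw [apolarNormSq, support_mono_mul, Finset.sum_map]
  refine Finset.sum_congr rfl fun β _ => ?_
  simp [addLeftEmbedding_apply, coeff_monomial_mul]

lemma apolarNormSq_nonneg (P : MvPolynomial (Fin d) ℂ) : 0 ≤ apolarNormSq P :=
  Finset.sum_nonneg fun β _ => by positivity

lemma apolarNorm_monomial_one (γ : Fin d →₀ ℕ) :
    apolarNorm (monomial γ (1:ℂ)) = Real.sqrt (mfact γ) := by
  rw [apolarNorm, apolarNormSq]
  simp [support_monomial, coeff_monomial]

lemma degree_eq_sum_univ (β : Fin d →₀ ℕ) : β.degree = ∑ i, β i :=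
  Finset.sum_subset (Finset.subset_univ _) fun i _ h => Finsupp.notMem_support_iff.mp h

end aux

/-- For any multi-index  and homogeneous  of degree :
 with
, and  is optimal. -/
theorem stmt2 {d : ℕ} (hd : 0 < d) (α : Fin d →₀ ℕ) (m : ℕ) (Cam : ℝ)
    (hC : Cam = sSup {x : ℝ | ∃ β : Fin d →₀ ℕ, (∑ i, β i) = m ∧
        x = Real.sqrt ((mfact (α + β) : ℝ) / (mfact β : ℝ))}) :
    (∀ f : MvPolynomial (Fin d) ℂ, f.IsHomogeneous m →
      apolarNorm f ≤ apolarNorm (monomial α (1 : ℂ) * f) ∧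
      apolarNorm (monomial α (1 : ℂ) * f) ≤ Cam * apolarNorm f) ∧
    (∀ C' : ℝ, (∀ f : MvPolynomial (Fin d) ℂ, f.IsHomogeneous m →
        apolarNorm (monomial α (1 : ℂ) * f) ≤ C' * apolarNorm f) → Cam ≤ C') := by
  classical
  set T : Finset ℝ := (Finset.univ.finsuppAntidiag m).image
      (fun β : Fin d →₀ ℕ => Real.sqrt ((mfact (α + β) : ℝ) / (mfact β : ℝ))) with hT
  have hTne : T.Nonempty := by
    refine ⟨_, Finset.mem_image.2 ⟨Finsupp.single ⟨0, hd⟩ m, ?_, rfl⟩⟩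
    simp [Finset.mem_finsuppAntidiag, Finsupp.single_apply]
  have hset : {x : ℝ | ∃ β : Fin d →₀ ℕ, (∑ i, β i) = m ∧
      x = Real.sqrt ((mfact (α + β) : ℝ) / (mfact β : ℝ))} = ↑T := by
    ext x
    simp only [Set.mem_setOf_eq, hT, Finset.coe_image, Set.mem_image, Finset.mem_coe,
      Finset.mem_finsuppAntidiag]
    constructor
    · rintro ⟨β, hβ, rfl⟩
      exact ⟨β, ⟨hβ, Finset.subset_univ _⟩, rfl⟩
    · rintro ⟨β, ⟨hβ, -⟩, rfl⟩
      exact ⟨β, hβ, rfl⟩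
  have hCam : Cam = T.max' hTne := by
    rw [hC, hset, hTne.csSup_eq_max']
  have hCmem : Cam ∈ T := hCam ▸ T.max'_mem hTne
  have hCge : ∀ β : Fin d →₀ ℕ, (∑ i, β i) = m →
      Real.sqrt ((mfact (α + β) : ℝ) / (mfact β : ℝ)) ≤ Cam := by
    intro β hβ
    rw [hCam]
    exact T.le_max' _ (Finset.mem_image.2 ⟨β, by simp [Finset.mem_finsuppAntidiag, hβ], rfl⟩)
  have hC0 : 0 ≤ Cam := by
    obtain ⟨β, -, h⟩ := Finset.mem_image.1 hCmem
    rw [← h]; exact Real.sqrt_nonneg _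
  constructor
  · intro f hf
    have hsum : ∀ β ∈ f.support, (∑ i, β i) = m := by
      intro β hβ
      have := hf (MvPolynomial.mem_support_iff.mp hβ)
      rw [show (Finsupp.weight (1 : Fin d → ℕ)) = Finsupp.weight (fun _ => 1) from rfl,
        ← Finsupp.degree_eq_weight_one] at this
      rw [← degree_eq_sum_univ]; exact this
    constructor
    · apply Real.sqrt_le_sqrt
      rw [apolarNormSq, apolarNormSq_mono_mul]
      refine Finset.sum_le_sum fun β _ => ?_
      exact mul_le_mul_of_nonneg_right (Nat.cast_le.2 (mfact_le α β)) (by positivity)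
    · have h2 : apolarNormSq (monomial α (1:ℂ) * f) ≤ Cam ^ 2 * apolarNormSq f := by
        rw [apolarNormSq_mono_mul, apolarNormSq, Finset.mul_sum]
        refine Finset.sum_le_sum fun β hβ => ?_
        have hratio : (mfact (α + β) : ℝ) / (mfact β : ℝ) ≤ Cam ^ 2 := by
          have := hCge β (hsum β hβ)
          have h0 : (0:ℝ) ≤ (mfact (α + β) : ℝ) / (mfact β : ℝ) := by positivity
          calc (mfact (α + β) : ℝ) / (mfact β : ℝ)
              = Real.sqrt ((mfact (α + β) : ℝ) / (mfact β : ℝ)) ^ 2 := (Real.sq_sqrt h0).symm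
            _ ≤ Cam ^ 2 := by
                exact pow_le_pow_left₀ (Real.sqrt_nonneg _) this 2
        have hb : (0:ℝ) < (mfact β : ℝ) := by exact_mod_cast mfact_pos β
        have hfle : (mfact (α + β) : ℝ) ≤ Cam ^ 2 * (mfact β : ℝ) :=
          (div_le_iff₀ hb).mp hratio
        calc (mfact (α + β) : ℝ) * ‖f.coeff β‖ ^ 2
            ≤ Cam ^ 2 * (mfact β : ℝ) * ‖f.coeff β‖ ^ 2 :=
              mul_le_mul_of_nonneg_right hfle (by positivity)
          _ = Cam ^ 2 * ((mfact β : ℝ) * ‖f.coeff β‖ ^ 2) := by ring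
      calc apolarNorm (monomial α (1:ℂ) * f)
          ≤ Real.sqrt (Cam ^ 2 * apolarNormSq f) := Real.sqrt_le_sqrt h2
        _ = Cam * apolarNorm f := by
            rw [Real.sqrt_mul (sq_nonneg _), Real.sqrt_sq hC0, apolarNorm]
  · intro C' hC'
    obtain ⟨β₀, hβ₀mem, hβ₀⟩ := Finset.mem_image.1 hCmem
    have hβ₀sum : (∑ i, β₀ i) = m := (Finset.mem_finsuppAntidiag.mp hβ₀mem).1
    have hhom : (monomial β₀ (1:ℂ)).IsHomogeneous m :=
      isHomogeneous_monomial _ (by rw [degree_eq_sum_univ]; exact hβ₀sum)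
    have := hC' _ hhom
    rw [monomial_mul, mul_one, apolarNorm_monomial_one, apolarNorm_monomial_one] at this
    have hb : (0:ℝ) < Real.sqrt (mfact β₀) :=
      Real.sqrt_pos.2 (by exact_mod_cast mfact_pos β₀)
    rw [← hβ₀, Real.sqrt_div (Nat.cast_nonneg _), div_le_iff₀ hb]
    exact this
end

section
/- (Bargmann's formula) For polynomials P and Q in d complex variables, ⟨P,Q⟩_a = π^{-d} ∫_{ℝ^d}∫_{ℝ^d} P(x+iy) conj(Q(x+iy)) e^{-|x|^2-|y|^2} dx dy, and in particular this integral is finite. -/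
open MvPolynomial Finset

section BargmannAux
open MeasureTheory Set
open scoped Real


noncomputable def bfun (m n : ℕ) (q : ℝ × ℝ) : ℂ :=
  ((q.1 : ℂ) + (q.2 : ℂ) * Complex.I) ^ m *
    (starRingEnd ℂ) ((q.1 : ℂ) + (q.2 : ℂ) * Complex.I) ^ n *
    Complex.exp (-(q.1 : ℂ) ^ 2 - (q.2 : ℂ) ^ 2)

lemma bfun_continuous (m n : ℕ) : Continuous (bfun m n) := by
  have hc : Continuous fun q : ℝ × ℝ => (q.1 : ℂ) + (q.2 : ℂ) * Complex.I := by fun_prop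
  unfold bfun
  exact ((hc.pow m).mul ((Complex.continuous_conj.comp hc).pow n)).mul
    (Complex.continuous_exp.comp (by fun_prop))

lemma abs_pow_exp_integrable (k : ℕ) :
    Integrable (fun x : ℝ => |x| ^ k * Real.exp (-x ^ 2)) := by
  have h := integrable_rpow_mul_exp_neg_mul_sq (b := 1) one_pos
    (s := (k : ℝ)) (lt_of_lt_of_le neg_one_lt_zero (Nat.cast_nonneg k))
  simp_rw [Real.rpow_natCast, neg_one_mul] at h
  simpa [abs_mul, abs_pow, abs_of_nonneg (Real.exp_pos _).le] using h.abs

lemma bfun_integrable (m n : ℕ) : Integrable (bfun m n) := by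
  have hInt : Integrable (fun q : ℝ × ℝ => ∑ k ∈ Finset.range (m + n + 1),
      (|q.1| ^ k * Real.exp (-q.1 ^ 2)) * (|q.2| ^ (m + n - k) * Real.exp (-q.2 ^ 2)) *
      ((m + n).choose k : ℝ)) := by
    apply integrable_finset_sum
    intro k _
    rw [Measure.volume_eq_prod]
    exact (Integrable.mul_prod (abs_pow_exp_integrable k)
      (abs_pow_exp_integrable (m + n - k))).mul_const _
  refine hInt.mono' (bfun_continuous m n).aestronglyMeasurable ?_
  filter_upwards with q
  have hz : ‖((q.1 : ℂ) + (q.2 : ℂ) * Complex.I)‖ ≤ |q.1| + |q.2| := by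
    refine (norm_add_le _ _).trans ?_
    simp
  have hre : (-(q.1 : ℂ) ^ 2 - (q.2 : ℂ) ^ 2).re = -q.1 ^ 2 - q.2 ^ 2 := by
    simp [← Complex.ofReal_pow]
  have hnorm : ‖bfun m n q‖ = ‖((q.1 : ℂ) + (q.2 : ℂ) * Complex.I)‖ ^ (m + n) *
      (Real.exp (-q.1 ^ 2) * Real.exp (-q.2 ^ 2)) := by
    simp only [bfun, norm_mul, norm_pow, Complex.norm_conj,
      Complex.norm_exp, hre, pow_add]
    rw [← Real.exp_add]
    ring_nf
  rw [hnorm]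
  calc ‖((q.1 : ℂ) + (q.2 : ℂ) * Complex.I)‖ ^ (m + n) *
        (Real.exp (-q.1 ^ 2) * Real.exp (-q.2 ^ 2))
      ≤ (|q.1| + |q.2|) ^ (m + n) * (Real.exp (-q.1 ^ 2) * Real.exp (-q.2 ^ 2)) := by
        exact mul_le_mul_of_nonneg_right
          (pow_le_pow_left₀ (norm_nonneg _) hz _) (by positivity)
    _ = ∑ k ∈ Finset.range (m + n + 1),
        (|q.1| ^ k * Real.exp (-q.1 ^ 2)) * (|q.2| ^ (m + n - k) * Real.exp (-q.2 ^ 2)) *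
        ((m + n).choose k : ℝ) := by
        rw [add_pow, Finset.sum_mul]
        refine Finset.sum_congr rfl fun k _ => ?_
        ring


lemma bfun_polar (m n : ℕ) (p : ℝ × ℝ) :
    p.1 • bfun m n (polarCoord.symm p) =
      ((p.1 : ℂ) ^ (m + n + 1) * Complex.exp (-(p.1 : ℂ) ^ 2)) *
        Complex.exp ((((m : ℤ) - (n : ℤ) : ℤ) : ℂ) * p.2 * Complex.I) := by
  obtain ⟨r, θ⟩ := p
  have hz : ((r * Real.cos θ : ℝ) : ℂ) + ((r * Real.sin θ : ℝ) : ℂ) * Complex.I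
      = (r : ℂ) * Complex.exp (θ * Complex.I) := by
    rw [Complex.exp_mul_I]; push_cast; ring
  have hzc : (starRingEnd ℂ) (((r * Real.cos θ : ℝ) : ℂ) + ((r * Real.sin θ : ℝ) : ℂ) * Complex.I)
      = (r : ℂ) * Complex.exp (-(θ * Complex.I)) := by
    rw [hz, map_mul, Complex.conj_ofReal, ← Complex.exp_conj]
    congr 1
    simp
  have harg : -((r * Real.cos θ : ℝ) : ℂ) ^ 2 - ((r * Real.sin θ : ℝ) : ℂ) ^ 2
      = -(r : ℂ) ^ 2 := by
    have h1 : (Real.cos θ : ℂ) ^ 2 + (Real.sin θ : ℂ) ^ 2 = 1 := by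
      norm_cast; exact Real.cos_sq_add_sin_sq θ
    rw [Complex.ofReal_mul, Complex.ofReal_mul]
    linear_combination (-(r : ℂ) ^ 2) * h1
  have hexp : Complex.exp (θ * Complex.I) ^ m * Complex.exp (-(θ * Complex.I)) ^ n
      = Complex.exp ((((m : ℤ) - (n : ℤ) : ℤ) : ℂ) * θ * Complex.I) := by
    rw [← Complex.exp_nat_mul, ← Complex.exp_nat_mul, ← Complex.exp_add]
    congr 1
    push_cast
    ring
  show (r : ℝ) • bfun m n (r * Real.cos θ, r * Real.sin θ) = _
  unfold bfun
  rw [hzc, hz, harg, Complex.real_smul, mul_pow, mul_pow]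
  rw [show (r:ℂ) * ((r:ℂ)^m * Complex.exp (θ*Complex.I)^m * ((r:ℂ)^n * Complex.exp (-(θ*Complex.I))^n)
      * Complex.exp (-(r:ℂ)^2)) = (r:ℂ)^(m+n+1) * Complex.exp (-(r:ℂ)^2) *
      (Complex.exp (θ*Complex.I)^m * Complex.exp (-(θ*Complex.I))^n) by ring, hexp]

open intervalIntegral in
lemma angular_eq (m n : ℕ) : ∫ θ in Ioo (-π) π,
    Complex.exp ((((m : ℤ) - (n : ℤ) : ℤ) : ℂ) * θ * Complex.I) =
    if m = n then ((2 * π : ℝ) : ℂ) else 0 := by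
  by_cases h : m = n
  · subst h
    simp only [sub_self, Int.cast_zero, zero_mul, Complex.exp_zero, if_pos]
    rw [setIntegral_const, measureReal_def, Real.volume_Ioo, show π - -π = 2 * π by ring,
      ENNReal.toReal_ofReal (by positivity), Complex.real_smul, mul_one]
  · rw [if_neg h]
    have hk : ((m : ℤ) - n) ≠ 0 := sub_ne_zero.2 (by exact_mod_cast h)
    have hc : ((((m : ℤ) - n : ℤ)) : ℂ) * Complex.I ≠ 0 :=
      mul_ne_zero (Int.cast_ne_zero.2 hk) Complex.I_ne_zero
    simp_rw [mul_right_comm ((((m : ℤ) - (n : ℤ) : ℤ) : ℂ)) _ Complex.I]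
    rw [← integral_Ioc_eq_integral_Ioo,
      ← intervalIntegral.integral_of_le (by linarith [Real.pi_pos]),
      integral_exp_mul_complex hc]
    have hper : Complex.exp (((((m : ℤ) - n : ℤ)) : ℂ) * Complex.I * (π : ℝ))
        = Complex.exp (((((m : ℤ) - n : ℤ)) : ℂ) * Complex.I * ((-π : ℝ) : ℂ)) := by
      rw [show (((((m : ℤ) - n : ℤ)) : ℂ) * Complex.I * (π : ℝ) : ℂ)
          = ((((m : ℤ) - n : ℤ)) : ℂ) * Complex.I * ((-π : ℝ) : ℂ)
            + ((((m : ℤ) - n : ℤ)) : ℂ) * (2 * (π : ℝ) * Complex.I) by push_cast; ring,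
        Complex.exp_add, Complex.exp_int_mul_two_pi_mul_I, mul_one]
    rw [show ((-π : ℝ) : ℂ) = (((-π : ℝ)) : ℂ) from rfl] at hper
    rw [hper]
    simp

lemma radial_eq (m n : ℕ) : ∫ r in Ioi (0 : ℝ), (r : ℂ) ^ (m + n + 1) *
    Complex.exp (-(r : ℂ) ^ 2) =
    ((1 / 2 * Real.Gamma ((((m + n + 1 : ℕ) : ℝ) + 1) / 2) : ℝ) : ℂ) := by
  have h1 : ∀ r : ℝ, (r : ℂ) ^ (m + n + 1) * Complex.exp (-(r : ℂ) ^ 2)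
      = ((r ^ (m + n + 1) * Real.exp (-r ^ 2) : ℝ) : ℂ) := by
    intro r; push_cast; ring
  simp_rw [h1]
  have h3 : (∫ r in Ioi (0:ℝ), ((r ^ (m + n + 1) * Real.exp (-r ^ 2) : ℝ) : ℂ))
      = ((∫ r in Ioi (0:ℝ), r ^ (m + n + 1) * Real.exp (-r ^ 2) : ℝ) : ℂ) := integral_ofReal
  rw [h3]
  have h2 := integral_rpow_mul_exp_neg_rpow (p := 2) (q := ((m + n + 1 : ℕ) : ℝ)) two_pos
    (lt_of_lt_of_le neg_one_lt_zero (Nat.cast_nonneg _))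
  simp_rw [Real.rpow_natCast, Real.rpow_two] at h2
  rw [h2]

lemma bfun_integral (m n : ℕ) :
    ∫ q, bfun m n q = if m = n then (Real.pi : ℂ) * (m.factorial : ℂ) else 0 := by
  rw [← integral_comp_polarCoord_symm (bfun m n)]
  simp_rw [bfun_polar]
  rw [polarCoord_target, Measure.volume_eq_prod, ← Measure.prod_restrict,
    integral_prod_mul (f := fun r : ℝ => (r : ℂ) ^ (m + n + 1) * Complex.exp (-(r : ℂ) ^ 2))
      (g := fun θ : ℝ => Complex.exp ((((m : ℤ) - (n : ℤ) : ℤ) : ℂ) * θ * Complex.I)),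
    radial_eq, angular_eq]
  by_cases h : m = n
  · subst h
    rw [if_pos rfl, if_pos rfl]
    have : (((m + m + 1 : ℕ) : ℝ) + 1) / 2 = (m : ℝ) + 1 := by push_cast; ring
    rw [this, Real.Gamma_nat_eq_factorial]
    push_cast
    ring
  · rw [if_neg h, if_neg h, mul_zero]

noncomputable def Gfun {d : ℕ} (α β : Fin d →₀ ℕ) (p : (Fin d → ℝ) × (Fin d → ℝ)) : ℂ :=
  ∏ i, bfun (α i) (β i) (p.1 i, p.2 i)

lemma Gfun_comp {d : ℕ} (α β : Fin d →₀ ℕ) :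
    (Gfun α β) ∘ (MeasurableEquiv.arrowProdEquivProdArrow ℝ ℝ (Fin d)) =
    fun q : Fin d → ℝ × ℝ => ∏ i, bfun (α i) (β i) (q i) := by
  funext q
  simp [Gfun, MeasurableEquiv.arrowProdEquivProdArrow, Equiv.arrowProdEquivProdArrow]

lemma Gfun_integrable {d : ℕ} (α β : Fin d →₀ ℕ) : Integrable (Gfun α β) := by
  have mp := volume_measurePreserving_arrowProdEquivProdArrow ℝ ℝ (Fin d)
  have h : Integrable (fun q : Fin d → ℝ × ℝ => ∏ i, bfun (α i) (β i) (q i)) :=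
    Integrable.fintype_prod_dep (f := fun i q => bfun (α i) (β i) q)
      (fun i => bfun_integrable _ _)
  rw [← Gfun_comp α β] at h
  exact (mp.integrable_comp_emb
    (MeasurableEquiv.arrowProdEquivProdArrow ℝ ℝ (Fin d)).measurableEmbedding).mp h

lemma Gfun_integral {d : ℕ} (α β : Fin d →₀ ℕ) :
    ∫ p, Gfun α β p = if α = β then (Real.pi : ℂ) ^ (d : ℕ) * (mfact α : ℂ) else 0 := by
  have mp := volume_measurePreserving_arrowProdEquivProdArrow ℝ ℝ (Fin d)
  rw [← mp.integral_comp
    (MeasurableEquiv.arrowProdEquivProdArrow ℝ ℝ (Fin d)).measurableEmbedding (Gfun α β)]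
  have : (fun q : Fin d → ℝ × ℝ =>
      Gfun α β ((MeasurableEquiv.arrowProdEquivProdArrow ℝ ℝ (Fin d)) q)) =
      fun q : Fin d → ℝ × ℝ => ∏ i, bfun (α i) (β i) (q i) := Gfun_comp α β
  rw [this, volume_pi, integral_fintype_prod_eq_prod (ι := Fin d) (fun i q => bfun (α i) (β i) q)]
  simp_rw [bfun_integral]
  by_cases h : α = β
  · subst h
    rw [if_pos rfl]
    simp only [if_true]
    rw [Finset.prod_mul_distrib, Finset.prod_const, Finset.card_univ, Fintype.card_fin]
    congr 1
    rw [mfact]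
    push_cast
    rfl
  · rw [if_neg h]
    obtain ⟨i, hi⟩ : ∃ i, α i ≠ β i := by
      by_contra hc
      push_neg at hc
      exact h (Finsupp.ext hc)
    exact Finset.prod_eq_zero (Finset.mem_univ i) (if_neg hi)

open MvPolynomial in
theorem main_thm {d : ℕ} (P Q : MvPolynomial (Fin d) ℂ) :
    Integrable (fun p : (Fin d → ℝ) × (Fin d → ℝ) =>
      MvPolynomial.eval (fun i => (p.1 i : ℂ) + (p.2 i : ℂ) * Complex.I) P *
        (starRingEnd ℂ) (MvPolynomial.eval (fun i => (p.1 i : ℂ) + (p.2 i : ℂ) * Complex.I) Q) *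
        Complex.exp (-(∑ i, (p.1 i : ℂ) ^ 2) - ∑ i, (p.2 i : ℂ) ^ 2)) ∧
    (∑ α ∈ P.support ∪ Q.support,
        (mfact α : ℂ) * P.coeff α * (starRingEnd ℂ) (Q.coeff α)) = (Real.pi : ℂ) ^ (-(d : ℤ)) *
      ∫ p : (Fin d → ℝ) × (Fin d → ℝ),
        MvPolynomial.eval (fun i => (p.1 i : ℂ) + (p.2 i : ℂ) * Complex.I) P *
          (starRingEnd ℂ) (MvPolynomial.eval (fun i => (p.1 i : ℂ) + (p.2 i : ℂ) * Complex.I) Q) *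
          Complex.exp (-(∑ i, (p.1 i : ℂ) ^ 2) - ∑ i, (p.2 i : ℂ) ^ 2) := by
  classical
  have hprod : ∀ (p : (Fin d → ℝ) × (Fin d → ℝ)) (α β : Fin d →₀ ℕ), Gfun α β p =
      (∏ i, ((p.1 i : ℂ) + (p.2 i : ℂ) * Complex.I) ^ (α i)) *
        (∏ i, (starRingEnd ℂ) ((p.1 i : ℂ) + (p.2 i : ℂ) * Complex.I) ^ (β i)) *
        Complex.exp (-(∑ i, (p.1 i : ℂ) ^ 2) - ∑ i, (p.2 i : ℂ) ^ 2) := by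
    intro p α β
    unfold Gfun bfun
    rw [Finset.prod_mul_distrib, Finset.prod_mul_distrib, ← Complex.exp_sum]
    congr 1
    rw [Finset.sum_sub_distrib, Finset.sum_neg_distrib]
  have hrepr : (fun p : (Fin d → ℝ) × (Fin d → ℝ) =>
      MvPolynomial.eval (fun i => (p.1 i : ℂ) + (p.2 i : ℂ) * Complex.I) P *
        (starRingEnd ℂ) (MvPolynomial.eval (fun i => (p.1 i : ℂ) + (p.2 i : ℂ) * Complex.I) Q) *
        Complex.exp (-(∑ i, (p.1 i : ℂ) ^ 2) - ∑ i, (p.2 i : ℂ) ^ 2)) =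
      fun p => ∑ α ∈ P.support, ∑ β ∈ Q.support,
        (P.coeff α * (starRingEnd ℂ) (Q.coeff β)) * Gfun α β p := by
    funext p
    rw [eval_eq', eval_eq', map_sum, Finset.sum_mul_sum, Finset.sum_mul]
    refine Finset.sum_congr rfl fun α hα => ?_
    rw [Finset.sum_mul]
    refine Finset.sum_congr rfl fun β hβ => ?_
    rw [hprod p α β, map_mul, map_prod]
    simp_rw [map_pow]
    ring
  have hint : ∀ α β : Fin d →₀ ℕ, Integrable (fun p : (Fin d → ℝ) × (Fin d → ℝ) =>
      (P.coeff α * (starRingEnd ℂ) (Q.coeff β)) * Gfun α β p) :=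
    fun α β => (Gfun_integrable α β).const_mul _
  have hIsum : Integrable (fun p : (Fin d → ℝ) × (Fin d → ℝ) =>
      ∑ α ∈ P.support, ∑ β ∈ Q.support,
        (P.coeff α * (starRingEnd ℂ) (Q.coeff β)) * Gfun α β p) :=
    integrable_finset_sum _ (fun α _ => integrable_finset_sum _ fun β _ => hint α β)
  constructor
  · rw [hrepr]; exact hIsum
  · rw [hrepr, integral_finset_sum _
      (fun α _ => integrable_finset_sum _ fun β _ => hint α β)]
    have hswap : ∀ α ∈ P.support, (∫ p : (Fin d → ℝ) × (Fin d → ℝ), ∑ β ∈ Q.support,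
        (P.coeff α * (starRingEnd ℂ) (Q.coeff β)) * Gfun α β p) =
        ∑ β ∈ Q.support, (P.coeff α * (starRingEnd ℂ) (Q.coeff β)) * ∫ p, Gfun α β p := by
      intro α _
      rw [integral_finset_sum _ fun β _ => hint α β]
      exact Finset.sum_congr rfl fun β _ => integral_const_mul _ _
    rw [Finset.sum_congr rfl hswap]
    simp_rw [Gfun_integral, mul_ite, mul_zero, Finset.sum_ite_eq]
    rw [Finset.mul_sum]
    have hterm : ∀ α ∈ P.support, (Real.pi : ℂ) ^ (-(d : ℤ)) *
        (if α ∈ Q.support then (P.coeff α * (starRingEnd ℂ) (Q.coeff α)) *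
          ((Real.pi : ℂ) ^ (d : ℕ) * (mfact α : ℂ)) else 0) =
        if α ∈ Q.support then (mfact α : ℂ) * P.coeff α * (starRingEnd ℂ) (Q.coeff α)
          else 0 := by
      intro α _
      have hpi : (Real.pi : ℂ) ^ (-(d : ℤ)) * (Real.pi : ℂ) ^ (d : ℕ) = 1 := by
        rw [zpow_neg, ← zpow_natCast]
        exact inv_mul_cancel₀ (zpow_ne_zero _ (Complex.ofReal_ne_zero.2 Real.pi_ne_zero))
      split_ifs
      · calc (Real.pi : ℂ) ^ (-(d : ℤ)) * ((P.coeff α * (starRingEnd ℂ) (Q.coeff α)) *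
              ((Real.pi : ℂ) ^ (d : ℕ) * (mfact α : ℂ)))
            = ((Real.pi : ℂ) ^ (-(d : ℤ)) * (Real.pi : ℂ) ^ (d : ℕ)) *
              ((mfact α : ℂ) * P.coeff α * (starRingEnd ℂ) (Q.coeff α)) := by ring
          _ = _ := by rw [hpi, one_mul]
      · rw [mul_zero]
    rw [Finset.sum_congr rfl hterm, Finset.sum_ite_mem]
    refine (Finset.sum_subset Finset.inter_subset_union ?_).symm
    intro α _ hα
    by_cases hp : α ∈ P.support
    · have hq : α ∉ Q.support := fun hq => hα (Finset.mem_inter.2 ⟨hp, hq⟩)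
      simp [MvPolynomial.notMem_support_iff.1 hq]
    · simp [MvPolynomial.notMem_support_iff.1 hp]

end BargmannAux

open MeasureTheory in
/-- Bargmann's formula: the apolar inner product equals a Gaussian integral
over C^d identified with R^d x R^d, and the integrand is integrable. -/
theorem stmt6 {d : ℕ} (P Q : MvPolynomial (Fin d) ℂ) :
    Integrable (fun p : (Fin d → ℝ) × (Fin d → ℝ) =>
      MvPolynomial.eval (fun i => (p.1 i : ℂ) + (p.2 i : ℂ) * Complex.I) P *
        (starRingEnd ℂ) (MvPolynomial.eval (fun i => (p.1 i : ℂ) + (p.2 i : ℂ) * Complex.I) Q) *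
        Complex.exp (-(∑ i, (p.1 i : ℂ) ^ 2) - ∑ i, (p.2 i : ℂ) ^ 2)) ∧
    apolar P Q = (Real.pi : ℂ) ^ (-(d : ℤ)) *
      ∫ p : (Fin d → ℝ) × (Fin d → ℝ),
        MvPolynomial.eval (fun i => (p.1 i : ℂ) + (p.2 i : ℂ) * Complex.I) P *
          (starRingEnd ℂ) (MvPolynomial.eval (fun i => (p.1 i : ℂ) + (p.2 i : ℂ) * Complex.I) Q) *
          Complex.exp (-(∑ i, (p.1 i : ℂ) ^ 2) - ∑ i, (p.2 i : ℂ) ^ 2) := by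
  refine ⟨(main_thm P Q).1, ?_⟩
  unfold apolar
  exact (main_thm P Q).2
end

section
/- Let a_1,...,a_M ∈ ℂ^d and set σ_k(z) = ⟨z, conj(a_k)⟩ = a_{k,1}z_1+···+a_{k,d}z_d. Suppose there exists c ∈ ℂ^d \ {0} with Σ_j conj(a_{k,j}) c_j = 0 for all k. Then for every univariate polynomial g, ‖σ_1···σ_M · g(⟨z, conj(c)⟩)‖_a^2 = ‖σ_1···σ_M‖_a^2 · ‖g(⟨z, conj(c)⟩)‖_a^2. -/
open MvPolynomial Finset

noncomputable def ip {d : ℕ} (P Q : MvPolynomial (Fin d) ℂ) : ℂ :=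
  ∑ α ∈ P.support, (mfact α : ℂ) * P.coeff α * (starRingEnd ℂ) (Q.coeff α)


lemma ip_eq_sum (P Q : MvPolynomial (Fin d) ℂ) {t : Finset (Fin d →₀ ℕ)}
    (ht : P.support ⊆ t) :
    ip P Q = ∑ α ∈ t, (mfact α : ℂ) * P.coeff α * (starRingEnd ℂ) (Q.coeff α) := by
  refine Finset.sum_subset ht ?_
  intro α _ hα
  rw [MvPolynomial.notMem_support_iff.mp hα]
  ring

lemma ip_zero_left (Q : MvPolynomial (Fin d) ℂ) : ip 0 Q = 0 := by
  simp [ip]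

lemma ip_zero_right (P : MvPolynomial (Fin d) ℂ) : ip P 0 = 0 := by
  simp [ip]

lemma ip_add_left (P P' Q : MvPolynomial (Fin d) ℂ) :
    ip (P + P') Q = ip P Q + ip P' Q := by
  rw [ip_eq_sum (P + P') Q (t := P.support ∪ P'.support ∪ (P+P').support) (by intro x hx; simp [hx]),
    ip_eq_sum P Q (t := P.support ∪ P'.support ∪ (P+P').support) (by intro x hx; simp [hx]),
    ip_eq_sum P' Q (t := P.support ∪ P'.support ∪ (P+P').support) (by intro x hx; simp [hx]),
    ← Finset.sum_add_distrib]
  refine Finset.sum_congr rfl fun α _ => ?_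
  rw [MvPolynomial.coeff_add]; ring

lemma ip_smul_left (x : ℂ) (P Q : MvPolynomial (Fin d) ℂ) :
    ip (x • P) Q = x * ip P Q := by
  rw [ip_eq_sum (x • P) Q (t := P.support) (by
      intro α hα
      rw [MvPolynomial.mem_support_iff] at hα ⊢
      intro h; apply hα; rw [MvPolynomial.coeff_smul, h, smul_zero]),
    ip, Finset.mul_sum]
  refine Finset.sum_congr rfl fun α _ => ?_
  rw [MvPolynomial.coeff_smul]; simp; ring

lemma ip_add_right (P Q Q' : MvPolynomial (Fin d) ℂ) :
    ip P (Q + Q') = ip P Q + ip P Q' := by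
  unfold ip
  rw [← Finset.sum_add_distrib]
  refine Finset.sum_congr rfl fun α _ => ?_
  rw [MvPolynomial.coeff_add, map_add]; ring

lemma ip_smul_right (x : ℂ) (P Q : MvPolynomial (Fin d) ℂ) :
    ip P (x • Q) = (starRingEnd ℂ) x * ip P Q := by
  unfold ip
  rw [Finset.mul_sum]
  refine Finset.sum_congr rfl fun α _ => ?_
  rw [MvPolynomial.coeff_smul, smul_eq_mul, map_mul]; ring

lemma ip_sum_left {ι : Type*} (t : Finset ι) (f : ι → MvPolynomial (Fin d) ℂ)
    (Q : MvPolynomial (Fin d) ℂ) : ip (∑ i ∈ t, f i) Q = ∑ i ∈ t, ip (f i) Q := by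
  classical
  induction t using Finset.induction_on with
  | empty => simp [ip_zero_left]
  | insert _ _ h ih => rw [Finset.sum_insert h, Finset.sum_insert h, ip_add_left, ih]

lemma ip_sum_right {ι : Type*} (t : Finset ι) (f : ι → MvPolynomial (Fin d) ℂ)
    (P : MvPolynomial (Fin d) ℂ) : ip P (∑ i ∈ t, f i) = ∑ i ∈ t, ip P (f i) := by
  classical
  induction t using Finset.induction_on with
  | empty => simp [ip_zero_right]
  | insert _ _ h ih => rw [Finset.sum_insert h, Finset.sum_insert h, ip_add_right, ih]

lemma ip_conj (P Q : MvPolynomial (Fin d) ℂ) : ip P Q = (starRingEnd ℂ) (ip Q P) := by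
  rw [ip_eq_sum P Q (t := P.support ∪ Q.support) (by simp),
    ip_eq_sum Q P (t := P.support ∪ Q.support) (by simp), map_sum]
  refine Finset.sum_congr rfl fun α _ => ?_
  simp only [map_mul, Complex.conj_conj, map_natCast]
  ring

lemma ip_monomial_left (A : Fin d →₀ ℕ) (b : ℂ) (Q : MvPolynomial (Fin d) ℂ) :
    ip (monomial A b) Q = (mfact A : ℂ) * b * (starRingEnd ℂ) (Q.coeff A) := by
  rw [ip_eq_sum _ Q (t := {A}) (MvPolynomial.support_monomial_subset), Finset.sum_singleton,
    MvPolynomial.coeff_monomial, if_pos rfl]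

lemma mfact_add_single (β : Fin d →₀ ℕ) (j : Fin d) :
    mfact (β + Finsupp.single j 1) = mfact β * (β j + 1) := by
  set γ : Fin d →₀ ℕ := β + Finsupp.single j 1 with hγ
  unfold mfact
  have e1 := Finset.mul_prod_erase (univ : Finset (Fin d))
    (fun i : Fin d => (γ i).factorial) (mem_univ j)
  have e2 := Finset.mul_prod_erase (univ : Finset (Fin d))
    (fun i : Fin d => (β i).factorial) (mem_univ j)
  rw [← e1, ← e2]
  have h1 : γ j = β j + 1 := by simp [hγ]
  have h2 : ∀ i ∈ univ.erase j, (γ i).factorial = (β i).factorial := by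
    intro i hi
    rw [hγ, Finsupp.add_apply, Finsupp.single_apply, if_neg ((Finset.mem_erase.mp hi).1.symm),
      add_zero]
  rw [h1, Nat.factorial_succ, Finset.prod_congr rfl h2]
  ring
variable {d : ℕ}

lemma ip_X_mul (j : Fin d) (R S : MvPolynomial (Fin d) ℂ) :
    ip (X j * R) S = ip R (pderiv j S) := by
  induction R using MvPolynomial.induction_on' with
  | add p q hp hq => rw [mul_add, ip_add_left, ip_add_left, hp, hq]
  | monomial β b =>
    induction S using MvPolynomial.induction_on' with
    | add p q hp hq => rw [ip_add_right, map_add, ip_add_right, hp, hq]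
    | monomial γ s =>
      rw [show X j * monomial β b = monomial (β + Finsupp.single j 1) b by
          rw [X, monomial_mul, one_mul, add_comm],
        pderiv_monomial, ip_monomial_left, ip_monomial_left,
        MvPolynomial.coeff_monomial, MvPolynomial.coeff_monomial]
      by_cases hγ : γ = β + Finsupp.single j 1
      · subst hγ
        rw [if_pos rfl, if_pos (add_tsub_cancel_right β _), mfact_add_single]
        simp only [Finsupp.add_apply, Finsupp.single_eq_same]
        push_cast
        rw [map_mul, show (starRingEnd ℂ) ((β j : ℂ) + 1) = (β j : ℂ) + 1 by simp]
        ring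
      · rw [if_neg hγ]
        by_cases h0 : γ j = 0
        · simp [h0]
        · rw [if_neg (fun h => hγ (by
            rw [← h, tsub_add_cancel_of_le
              (Finsupp.single_le_iff.mpr (Nat.one_le_iff_ne_zero.mpr h0))]))]
          simp

noncomputable def Tc (c : Fin d → ℂ) (p : MvPolynomial (Fin d) ℂ) : MvPolynomial (Fin d) ℂ :=
  ∑ j, (starRingEnd ℂ) (c j) • pderiv j p

variable {c : Fin d → ℂ}

lemma Tc_zero : Tc c 0 = 0 := by simp [Tc]

lemma Tc_smul (x : ℂ) (p : MvPolynomial (Fin d) ℂ) : Tc c (x • p) = x • Tc c p := by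
  simp only [Tc, map_smul, Finset.smul_sum]
  refine Finset.sum_congr rfl fun j _ => ?_
  rw [Derivation.map_smul]
  exact smul_comm _ _ _

lemma Tc_mul (p q : MvPolynomial (Fin d) ℂ) :
    Tc c (p * q) = Tc c p * q + p * Tc c q := by
  simp only [Tc, pderiv_mul, smul_add, Finset.sum_add_distrib, Finset.sum_mul, Finset.mul_sum,
    smul_mul_assoc, mul_smul_comm]

lemma Tc_C (x : ℂ) : Tc c (C x) = 0 := by simp [Tc]

lemma Tc_one : Tc c (1 : MvPolynomial (Fin d) ℂ) = 0 := by
  rw [show (1 : MvPolynomial (Fin d) ℂ) = C 1 by simp]; exact Tc_C 1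

lemma Tc_linform (b : Fin d → ℂ) :
    Tc c (∑ j, C (b j) * X j) = C (∑ j, b j * (starRingEnd ℂ) (c j)) := by
  have h : ∀ j : Fin d, pderiv j (∑ i, C (b i) * X i) = C (b j) := by
    intro j
    rw [map_sum]
    rw [Finset.sum_eq_single j]
    · simp
    · intro i _ hij
      simp [pderiv_X, Pi.single_apply, hij]
    · simp
  simp only [Tc, h]
  rw [map_sum]
  exact Finset.sum_congr rfl fun j _ => by rw [← C_mul' , ← C_mul, mul_comm]

lemma Tc_mul_left_zero {P : MvPolynomial (Fin d) ℂ} (hP : Tc c P = 0)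
    (q : MvPolynomial (Fin d) ℂ) : Tc c (P * q) = P * Tc c q := by
  rw [Tc_mul, hP, zero_mul, zero_add]

lemma Tc_iter_zero (n : ℕ) : (Tc c)^[n] (0 : MvPolynomial (Fin d) ℂ) = 0 := by
  induction n with
  | zero => rfl
  | succ n ih => rw [Function.iterate_succ_apply, Tc_zero, ih]

lemma ip_L_mul (c : Fin d → ℂ) (R S : MvPolynomial (Fin d) ℂ) :
    ip ((∑ j, C (c j) * X j) * R) S = ip R (Tc c S) := by
  rw [Finset.sum_mul, ip_sum_left, Tc, ip_sum_right]
  refine Finset.sum_congr rfl fun j _ => ?_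
  rw [mul_assoc, C_mul', ip_smul_left, ip_X_mul, ip_smul_right, Complex.conj_conj]

lemma ip_L_pow_mul (c : Fin d → ℂ) (m : ℕ) (R S : MvPolynomial (Fin d) ℂ) :
    ip ((∑ j, C (c j) * X j) ^ m * R) S = ip R ((Tc c)^[m] S) := by
  induction m generalizing S with
  | zero => rw [pow_zero, one_mul, Function.iterate_zero_apply]
  | succ m ih =>
    rw [pow_succ', mul_assoc, ip_L_mul, ih, Function.iterate_succ_apply]

lemma Tc_L_pow_succ {L : MvPolynomial (Fin d) ℂ} {s : ℂ} (hs : Tc c L = C s) (m : ℕ) :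
    Tc c (L ^ (m + 1)) = ((m : ℂ) + 1) • (C s * L ^ m) := by
  induction m with
  | zero => simp [hs]
  | succ m ih =>
    rw [pow_succ, Tc_mul, ih, hs, smul_mul_assoc]
    rw [show C s * L ^ m * L = C s * L ^ (m + 1) by rw [mul_assoc, ← pow_succ]]
    rw [show L ^ (m + 1) * C s = C s * L ^ (m + 1) by ring]
    push_cast
    module

lemma Tc_PL {P L : MvPolynomial (Fin d) ℂ} {s : ℂ} (hP : Tc c P = 0) (hs : Tc c L = C s)
    (m : ℕ) : Tc c (P * L ^ m) = (m : ℂ) • (C s * (P * L ^ (m - 1))) := by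
  cases m with
  | zero =>
    rw [pow_zero, mul_one, hP]
    simp
  | succ m =>
    rw [Tc_mul_left_zero hP, Tc_L_pow_succ hs, mul_smul_comm]
    push_cast
    congr 1
    ring

lemma Tc_iter {P L : MvPolynomial (Fin d) ℂ} {s : ℂ} (hP : Tc c P = 0) (hs : Tc c L = C s) :
    ∀ n m : ℕ, (Tc c)^[n] (P * L ^ m)
      = ((m.descFactorial n : ℕ) : ℂ) • (C s ^ n * (P * L ^ (m - n))) := by
  intro n
  induction n with
  | zero => intro m; simp
  | succ n ih =>
    intro m
    have hP' : Tc c (C (s ^ n) * P) = 0 := by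
      rw [Tc_mul, Tc_C, hP, zero_mul, mul_zero, add_zero]
    rw [Function.iterate_succ_apply', ih m, Tc_smul,
      show C s ^ n * (P * L ^ (m - n)) = (C (s ^ n) * P) * L ^ (m - n) by
        rw [map_pow, mul_assoc],
      Tc_PL hP' hs, smul_smul]
    rw [Nat.sub_sub]
    congr 1
    · norm_cast
      rw [Nat.descFactorial_succ, mul_comm]
    · rw [map_pow]
      ring

lemma ip_one_one : ip (1 : MvPolynomial (Fin d) ℂ) 1 = 1 := by
  rw [show (1 : MvPolynomial (Fin d) ℂ) = monomial 0 1 by simp, ip_monomial_left]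
  simp [mfact]

lemma ip_P_PLk {P L : MvPolynomial (Fin d) ℂ} (hP : Tc c P = 0)
    (hL : L = ∑ j, C (c j) * X j) (k : ℕ) (hk : 1 ≤ k) :
    ip P (P * L ^ k) = 0 := by
  cases k with
  | zero => omega
  | succ j =>
    rw [ip_conj, mul_comm P, hL, ip_L_pow_mul, Function.iterate_succ_apply, hP,
      Tc_iter_zero, ip_zero_right, map_zero]

lemma ip_PL_PL {P L : MvPolynomial (Fin d) ℂ} {s : ℂ} (hP : Tc c P = 0) (hs : Tc c L = C s)
    (hcs : (starRingEnd ℂ) s = s) (hL : L = ∑ j, C (c j) * X j) (m n : ℕ) :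
    ip (P * L ^ m) (P * L ^ n)
      = (if m = n then (n.factorial : ℂ) * s ^ n else 0) * ip P P := by
  rw [show P * L ^ m = L ^ m * P from mul_comm _ _, hL, ip_L_pow_mul, ← hL,
    Tc_iter hP hs m n, ip_smul_right, map_natCast, ← map_pow, C_mul', ip_smul_right,
    map_pow, hcs]
  rcases lt_trichotomy m n with h | h | h
  · rw [if_neg h.ne, ip_P_PLk hP hL (n - m) (by omega)]
    ring
  · subst h
    rw [if_pos rfl, Nat.descFactorial_self, Nat.sub_self, pow_zero, mul_one]
    ring
  · rw [if_neg h.ne', Nat.descFactorial_eq_zero_iff_lt.mpr h]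
    push_cast
    ring

lemma ip_PG {P : MvPolynomial (Fin d) ℂ} {s : ℂ} (hP : Tc c P = 0)
    (hs : Tc c (∑ j, C (c j) * X j) = C s) (hcs : (starRingEnd ℂ) s = s) (g : Polynomial ℂ) :
    ip (P * Polynomial.eval₂ C (∑ j, C (c j) * X j) g)
       (P * Polynomial.eval₂ C (∑ j, C (c j) * X j) g)
      = (∑ i ∈ range (g.natDegree + 1),
          g.coeff i * (starRingEnd ℂ) (g.coeff i) * (i.factorial : ℂ) * s ^ i) * ip P P := by
  set L := ∑ j, C (c j) * X j with hL
  rw [Polynomial.eval₂_eq_sum_range]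
  have hPG : P * (∑ i ∈ range (g.natDegree + 1), C (g.coeff i) * L ^ i)
      = ∑ i ∈ range (g.natDegree + 1), g.coeff i • (P * L ^ i) := by
    rw [Finset.mul_sum]
    refine Finset.sum_congr rfl fun i _ => ?_
    rw [C_mul', mul_smul_comm]
  rw [hPG]
  calc ip (∑ i ∈ range (g.natDegree + 1), g.coeff i • (P * L ^ i))
        (∑ i ∈ range (g.natDegree + 1), g.coeff i • (P * L ^ i))
      = ∑ i ∈ range (g.natDegree + 1), ∑ j ∈ range (g.natDegree + 1),
          g.coeff i * ((starRingEnd ℂ) (g.coeff j) * ip (P * L ^ i) (P * L ^ j)) := by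
        rw [ip_sum_left]
        refine Finset.sum_congr rfl fun i _ => ?_
        rw [ip_smul_left, ip_sum_right, Finset.mul_sum]
        refine Finset.sum_congr rfl fun j _ => ?_
        rw [ip_smul_right]
    _ = ∑ i ∈ range (g.natDegree + 1),
          g.coeff i * (starRingEnd ℂ) (g.coeff i) * (i.factorial : ℂ) * s ^ i * ip P P := by
        refine Finset.sum_congr rfl fun i hi => ?_
        rw [Finset.sum_eq_single i]
        · rw [ip_PL_PL hP hs hcs hL i i, if_pos rfl]
          ring
        · intro j _ hji
          rw [ip_PL_PL hP hs hcs hL i j, if_neg (fun e => hji e.symm)]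
          ring
        · intro h
          exact absurd hi h
    _ = (∑ i ∈ range (g.natDegree + 1),
          g.coeff i * (starRingEnd ℂ) (g.coeff i) * (i.factorial : ℂ) * s ^ i) * ip P P := by
        rw [Finset.sum_mul]

lemma cast_apolarNormSq (Q : MvPolynomial (Fin d) ℂ) :
    ((∑ α ∈ Q.support, (mfact α : ℝ) * ‖Q.coeff α‖ ^ 2 : ℝ) : ℂ) = ip Q Q := by
  unfold ip
  push_cast
  refine Finset.sum_congr rfl fun α _ => ?_
  rw [mul_assoc, Complex.mul_conj, ← Complex.ofReal_pow, Complex.sq_norm]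

/-- If a nonzero vector c is orthogonal to the (conjugated) coefficient vectors of
the linear forms sigma_k, then multiplication of their product by any univariate
polynomial in the linear form determined by c is multiplicative for the apolar norm. -/
theorem stmt8 {d M : ℕ} (a : Fin M → Fin d → ℂ) (c : Fin d → ℂ) (hc : c ≠ 0)
    (horth : ∀ k : Fin M, ∑ j, (starRingEnd ℂ) (a k j) * c j = 0) (g : Polynomial ℂ) :
    apolarNormSq ((∏ k, ∑ j, MvPolynomial.C (a k j) * MvPolynomial.X j) *
        Polynomial.eval₂ (MvPolynomial.C : ℂ →+* MvPolynomial (Fin d) ℂ)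
          (∑ j, MvPolynomial.C (c j) * MvPolynomial.X j) g)
      = apolarNormSq (∏ k, ∑ j, MvPolynomial.C (a k j) * MvPolynomial.X j) *
        apolarNormSq (Polynomial.eval₂ (MvPolynomial.C : ℂ →+* MvPolynomial (Fin d) ℂ)
          (∑ j, MvPolynomial.C (c j) * MvPolynomial.X j) g) := by
  classical
  set P := ∏ k, ∑ j, (MvPolynomial.C : ℂ →+* MvPolynomial (Fin d) ℂ) (a k j) * X j with hPdef
  set L := ∑ j, (MvPolynomial.C : ℂ →+* MvPolynomial (Fin d) ℂ) (c j) * X j with hLdef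
  set s := ∑ j, c j * (starRingEnd ℂ) (c j) with hsdef
  have hs : Tc c L = C s := by rw [hLdef, hsdef]; exact Tc_linform c
  have hcs : (starRingEnd ℂ) s = s := by
    rw [hsdef, map_sum]
    refine Finset.sum_congr rfl fun j _ => ?_
    rw [map_mul, Complex.conj_conj, mul_comm]
  have hP : Tc c P = 0 := by
    rw [hPdef]
    refine Finset.prod_induction _ (fun p => Tc c p = 0)
      (fun x y hx hy => by
        show Tc c (x * y) = 0
        rw [Tc_mul, hx, hy, zero_mul, mul_zero, add_zero])
      Tc_one (fun k _ => ?_)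
    show Tc c (∑ j, C (a k j) * X j) = 0
    rw [Tc_linform]
    have h2 : ∑ j, a k j * (starRingEnd ℂ) (c j) = 0 := by
      have h3 := congrArg (starRingEnd ℂ) (horth k)
      rw [map_sum, map_zero] at h3
      rw [← h3]
      refine Finset.sum_congr rfl fun j _ => ?_
      rw [map_mul, Complex.conj_conj, mul_comm]
    rw [h2, map_zero]
  have key := ip_PG hP hs hcs g
  have key1 := ip_PG (P := (1 : MvPolynomial (Fin d) ℂ)) Tc_one hs hcs g
  rw [one_mul, ip_one_one, mul_one] at key1
  have c1 : ((apolarNormSq (P * Polynomial.eval₂ (MvPolynomial.C : ℂ →+* MvPolynomial (Fin d) ℂ) L g) : ℝ) : ℂ)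
      = ((apolarNormSq P : ℝ) : ℂ)
        * ((apolarNormSq (Polynomial.eval₂ (MvPolynomial.C : ℂ →+* MvPolynomial (Fin d) ℂ) L g) : ℝ) : ℂ) := by
    unfold apolarNormSq
    rw [cast_apolarNormSq, cast_apolarNormSq, cast_apolarNormSq, key, key1]
    ring
  exact_mod_cast c1
end

section
/- Let P(z_1,z_2) = a z_1^2 + b z_1 z_2 + c z_2^2 be a nonzero polynomial with complex coefficients and suppose 4ac ≠ b^2. Then P satisfies the Khavinson–Shapiro bounds: there is a constant C > 0 such that for every m ≥ 1 and every homogeneous polynomial f_m of degree m in two variables, ‖P f_m‖_a ≥ C m^{1/2} ‖f_m‖_a. -/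
open MvPolynomial Finset
open Complex

set_option maxHeartbeats 1000000

noncomputable section KSproof

def w (n k : ℕ) : ℝ := ((Nat.factorial k * Nat.factorial (n - k) : ℕ) : ℝ)

lemma w_pos (n k : ℕ) : 0 < w n k := by
  unfold w
  exact_mod_cast Nat.mul_pos (Nat.factorial_pos _) (Nat.factorial_pos _)

lemma w_succ_succ (n j : ℕ) : w (n+1) (j+1) = ((j+1 : ℕ) : ℝ) * w n j := by
  unfold w
  have : n + 1 - (j+1) = n - j := by omega
  rw [this, Nat.factorial_succ]
  push_cast; ring

lemma w_succ_right (n k : ℕ) : w n (k+1) = ((k+1 : ℕ) : ℝ) * w (n-1) k := by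
  unfold w
  have : n - (k+1) = n - 1 - k := by omega
  rw [this, Nat.factorial_succ]
  push_cast; ring

lemma w_succ_left (n k : ℕ) (h : k ≤ n) : w (n+1) k = ((n+1-k : ℕ) : ℝ) * w n k := by
  unfold w
  have h1 : n + 1 - k = (n - k) + 1 := by omega
  rw [h1, Nat.factorial_succ]
  push_cast; ring

lemma w_pred_right (n k : ℕ) (h : k < n) :
    ((n-k : ℕ) : ℝ) * w n k = (((n-k : ℕ) : ℝ))^2 * w (n-1) k := by
  unfold w
  have h1 : n - k = (n - 1 - k) + 1 := by omega
  rw [h1, Nat.factorial_succ]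
  push_cast
  ring

def Nsq (n : ℕ) (f : ℕ → ℂ) : ℝ := ∑ k ∈ range (n+1), w n k * normSq (f k)

def sh (f : ℕ → ℂ) : ℕ → ℂ := fun k => if k = 0 then 0 else f (k-1)

def mulL (α β : ℂ) (f : ℕ → ℂ) : ℕ → ℂ := fun k => α * sh f k + β * f k

def derL (n : ℕ) (α β : ℂ) (f : ℕ → ℂ) : ℕ → ℂ :=
  fun k => (starRingEnd ℂ) α * ((k+1 : ℕ) : ℂ) * f (k+1)
    + (starRingEnd ℂ) β * ((n - k : ℕ) : ℂ) * f k

def Dsq (n : ℕ) (α β : ℂ) (f : ℕ → ℂ) : ℝ :=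
  ∑ k ∈ range n, w (n-1) k * normSq (derL n α β f k)

lemma w_factor (n k : ℕ) (h : k < n) : w n k = ((n-k : ℕ) : ℝ) * w (n-1) k := by
  unfold w
  have h1 : n - k = (n - 1 - k) + 1 := by omega
  rw [h1, Nat.factorial_succ]
  push_cast; ring

lemma nsq_nat (j : ℕ) : normSq ((j : ℕ) : ℂ) = ((j:ℕ):ℝ)^2 := by
  simp [Complex.normSq_apply]; ring

lemma lemT1 (n : ℕ) (f : ℕ → ℂ) :
    (∑ k ∈ range n, ((k+1:ℕ):ℝ)^2 * w (n-1) k * normSq (f (k+1)))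
      = ∑ j ∈ range (n+1), ((j:ℕ):ℝ) * w n j * normSq (f j) := by
  rw [Finset.sum_range_succ']
  simp only [Nat.cast_zero, zero_mul]
  rw [add_zero]
  refine (Finset.sum_congr rfl fun i _ => ?_).symm
  rw [w_succ_right]
  push_cast; ring

lemma lemT2 (n : ℕ) (f : ℕ → ℂ) :
    (∑ k ∈ range n, ((n-k:ℕ):ℝ)^2 * w (n-1) k * normSq (f k))
      = ∑ k ∈ range (n+1), ((n-k:ℕ):ℝ) * w n k * normSq (f k) := by
  rw [Finset.sum_range_succ]
  rw [Nat.sub_self, Nat.cast_zero, zero_mul, zero_mul, add_zero]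
  refine Finset.sum_congr rfl fun k hk => ?_
  rw [w_factor n k (Finset.mem_range.mp hk)]
  ring

lemma lemA (n : ℕ) (α β : ℂ) (f : ℕ → ℂ) (hf : ∀ k, n < k → f k = 0) :
    Nsq (n+1) (mulL α β f) =
      (normSq α + normSq β) * Nsq n f + Dsq n α β f := by
  have hfn1 : f (n+1) = 0 := hf _ (by omega)
  set S1 : ℝ := ∑ j ∈ range (n+1), ((j+1:ℕ):ℝ) * w n j * normSq (f j) with hS1
  set S2 : ℝ := ∑ k ∈ range (n+1), ((n+1-k:ℕ):ℝ) * w n k * normSq (f k) with hS2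
  set S3 : ℝ := ∑ j ∈ range (n+1),
    ((j+1:ℕ):ℝ) * w n j * (α * (starRingEnd ℂ) β * (f j * (starRingEnd ℂ) (f (j+1)))).re with hS3
  have hL : Nsq (n+1) (mulL α β f) = normSq α * S1 + normSq β * S2 + 2 * S3 := by
    have e1 : ∀ k, w (n+1) k * normSq (mulL α β f k)
        = normSq α * (w (n+1) k * normSq (sh f k))
          + normSq β * (w (n+1) k * normSq (f k))
          + 2 * (w (n+1) k * (α * (starRingEnd ℂ) β * (sh f k * (starRingEnd ℂ) (f k))).re) := by
      intro k
      show w (n+1) k * normSq (α * sh f k + β * f k) = _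
      rw [Complex.normSq_add, Complex.normSq_mul, Complex.normSq_mul]
      have : (α * sh f k * (starRingEnd ℂ) (β * f k))
          = α * (starRingEnd ℂ) β * (sh f k * (starRingEnd ℂ) (f k)) := by
        rw [map_mul]; ring
      rw [this]; ring
    unfold Nsq
    rw [Finset.sum_congr rfl (fun k _ => e1 k)]
    rw [Finset.sum_add_distrib, Finset.sum_add_distrib]
    have hA : (∑ k ∈ range (n+1+1), normSq α * (w (n+1) k * normSq (sh f k)))
        = normSq α * S1 := by
      rw [← Finset.mul_sum]
      congr 1
      rw [Finset.sum_range_succ']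
      have h0 : sh f 0 = 0 := by simp [sh]
      rw [h0, Complex.normSq_zero, mul_zero, add_zero, hS1]
      refine Finset.sum_congr rfl fun i _ => ?_
      have hsh : sh f (i+1) = f i := by simp [sh]
      rw [hsh, w_succ_succ]
    have hB : (∑ k ∈ range (n+1+1), normSq β * (w (n+1) k * normSq (f k)))
        = normSq β * S2 := by
      rw [← Finset.mul_sum]
      congr 1
      rw [Finset.sum_range_succ, hfn1, Complex.normSq_zero, mul_zero, add_zero, hS2]
      refine Finset.sum_congr rfl fun k hk => ?_
      rw [w_succ_left n k (by simpa using Nat.lt_succ_iff.mp (Finset.mem_range.mp hk))]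
    have hC : (∑ k ∈ range (n+1+1),
          2 * (w (n+1) k * (α * (starRingEnd ℂ) β * (sh f k * (starRingEnd ℂ) (f k))).re))
        = 2 * S3 := by
      rw [← Finset.mul_sum]
      congr 1
      rw [Finset.sum_range_succ']
      have h0 : sh f 0 = 0 := by simp [sh]
      rw [h0, zero_mul, mul_zero, Complex.zero_re, mul_zero, add_zero, hS3]
      refine Finset.sum_congr rfl fun i _ => ?_
      have hsh : sh f (i+1) = f i := by simp [sh]
      rw [hsh, w_succ_succ]
    rw [hA, hB, hC]
  have hT1 := lemT1 n f
  have hT2 := lemT2 n f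
  have hR : (normSq α + normSq β) * Nsq n f + Dsq n α β f
      = normSq α * S1 + normSq β * S2 + 2 * S3 := by
    have e2 : ∀ k ∈ range n, w (n-1) k * normSq (derL n α β f k)
        = normSq α * (((k+1:ℕ):ℝ)^2 * w (n-1) k * normSq (f (k+1)))
          + normSq β * (((n-k:ℕ):ℝ)^2 * w (n-1) k * normSq (f k))
          + 2 * (((k+1:ℕ):ℝ) * w n k
              * (α * (starRingEnd ℂ) β * (f k * (starRingEnd ℂ) (f (k+1)))).re) := by
      intro k hk
      have hkn : k < n := Finset.mem_range.mp hk
      show w (n-1) k * normSq ((starRingEnd ℂ) α * ((k+1:ℕ):ℂ) * f (k+1)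
          + (starRingEnd ℂ) β * ((n-k:ℕ):ℂ) * f k) = _
      rw [Complex.normSq_add]
      rw [Complex.normSq_mul, Complex.normSq_mul, Complex.normSq_mul, Complex.normSq_mul,
        Complex.normSq_conj, Complex.normSq_conj, nsq_nat, nsq_nat]
      have hcross : ((starRingEnd ℂ) α * ((k+1:ℕ):ℂ) * f (k+1)
            * (starRingEnd ℂ) ((starRingEnd ℂ) β * ((n-k:ℕ):ℂ) * f k)).re
          = ((k+1:ℕ):ℝ) * ((n-k:ℕ):ℝ)
            * (α * (starRingEnd ℂ) β * (f k * (starRingEnd ℂ) (f (k+1)))).re := by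
        have : ((starRingEnd ℂ) α * ((k+1:ℕ):ℂ) * f (k+1)
            * (starRingEnd ℂ) ((starRingEnd ℂ) β * ((n-k:ℕ):ℂ) * f k))
            = (((k+1:ℕ):ℝ) * ((n-k:ℕ):ℝ) : ℝ)
              * (starRingEnd ℂ) (α * (starRingEnd ℂ) β * (f k * (starRingEnd ℂ) (f (k+1)))) := by
          simp only [map_mul, Complex.conj_conj, Complex.conj_natCast]
          push_cast
          ring
        rw [this, Complex.re_ofReal_mul, Complex.conj_re]
      rw [hcross]
      have hw : w n k = ((n-k : ℕ) : ℝ) * w (n-1) k := w_factor n k hkn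
      rw [hw]; ring
    unfold Dsq
    rw [Finset.sum_congr rfl e2, Finset.sum_add_distrib, Finset.sum_add_distrib,
      ← Finset.mul_sum, ← Finset.mul_sum, ← Finset.mul_sum, hT1, hT2]
    have hI3 : (∑ k ∈ range n, ((k+1:ℕ):ℝ) * w n k
          * (α * (starRingEnd ℂ) β * (f k * (starRingEnd ℂ) (f (k+1)))).re) = S3 := by
      rw [hS3, Finset.sum_range_succ, hfn1]
      simp
    rw [hI3]
    have hI1 : Nsq n f + (∑ j ∈ range (n+1), ((j:ℕ):ℝ) * w n j * normSq (f j)) = S1 := by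
      unfold Nsq
      rw [hS1, ← Finset.sum_add_distrib]
      exact Finset.sum_congr rfl fun j _ => by push_cast; ring
    have hI2 : Nsq n f + (∑ k ∈ range (n+1), ((n-k:ℕ):ℝ) * w n k * normSq (f k)) = S2 := by
      unfold Nsq
      rw [hS2, ← Finset.sum_add_distrib]
      refine Finset.sum_congr rfl fun k hk => ?_
      have hkn : k ≤ n := Nat.lt_succ_iff.mp (Finset.mem_range.mp hk)
      have : ((n+1-k : ℕ) : ℝ) = ((n-k : ℕ) : ℝ) + 1 := by
        have : n + 1 - k = (n - k) + 1 := by omega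
        rw [this]; push_cast; ring
      rw [this]; ring
    rw [← hI1, ← hI2]; ring
  rw [hL, hR]

lemma Nsq_nonneg (n : ℕ) (f : ℕ → ℂ) : 0 ≤ Nsq n f := by
  refine Finset.sum_nonneg fun k _ => ?_
  exact mul_nonneg (le_of_lt (w_pos _ _)) (normSq_nonneg _)

lemma Dsq_nonneg (n : ℕ) (α β : ℂ) (f : ℕ → ℂ) : 0 ≤ Dsq n α β f := by
  refine Finset.sum_nonneg fun k _ => ?_
  exact mul_nonneg (le_of_lt (w_pos _ _)) (normSq_nonneg _)

lemma cs2 (p q A B : ℂ) : normSq (p*A + q*B) ≤ (normSq p + normSq q)*(normSq A + normSq B) := by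
  have h1 : ‖p*A+q*B‖ ≤ ‖p‖ * ‖A‖ + ‖q‖ * ‖B‖ := by
    calc ‖p*A+q*B‖ ≤ ‖p*A‖ + ‖q*B‖ := norm_add_le _ _
    _ = _ := by simp [norm_mul]
  have h2 : normSq (p*A+q*B) = ‖p*A+q*B‖^2 := (Complex.sq_norm _).symm
  rw [h2, ← Complex.sq_norm p, ← Complex.sq_norm q, ← Complex.sq_norm A, ← Complex.sq_norm B]
  have h3 := norm_nonneg (p*A+q*B)
  nlinarith [sq_nonneg (‖p‖ * ‖B‖ - ‖q‖ * ‖A‖),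
    norm_nonneg p, norm_nonneg q, norm_nonneg A, norm_nonneg B]

lemma inv2 (p q r s x y : ℂ) :
    normSq (p*s - r*q) * (normSq x + normSq y)
      ≤ (normSq p + normSq q + normSq r + normSq s)
        * (normSq (p*x+q*y) + normSq (r*x+s*y)) := by
  have h1 : normSq ((p*s-r*q)*x)
      ≤ (normSq s + normSq q) * (normSq (p*x+q*y) + normSq (r*x+s*y)) := by
    have e : (p*s-r*q)*x = s*(p*x+q*y) + (-q)*(r*x+s*y) := by ring
    rw [e]
    simpa [Complex.normSq_neg, add_comm] using cs2 s (-q) (p*x+q*y) (r*x+s*y)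
  have h2 : normSq ((p*s-r*q)*y)
      ≤ (normSq p + normSq r) * (normSq (p*x+q*y) + normSq (r*x+s*y)) := by
    have e : (p*s-r*q)*y = (-r)*(p*x+q*y) + p*(r*x+s*y) := by ring
    rw [e]
    have := cs2 (-r) p (p*x+q*y) (r*x+s*y)
    simpa [Complex.normSq_neg, add_comm] using this
  rw [Complex.normSq_mul] at h1 h2
  nlinarith [normSq_nonneg (p*x+q*y), normSq_nonneg (r*x+s*y), normSq_nonneg p,
    normSq_nonneg q, normSq_nonneg r, normSq_nonneg s, normSq_nonneg x, normSq_nonneg y,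
    normSq_nonneg (p*s - r*q)]

lemma lemB (n : ℕ) (α₁ β₁ α₂ β₂ : ℂ) (f : ℕ → ℂ) :
    normSq (α₁*β₂ - α₂*β₁) * ((n:ℝ) * Nsq n f)
      ≤ (normSq α₁ + normSq β₁ + normSq α₂ + normSq β₂)
        * (Dsq n α₁ β₁ f + Dsq n α₂ β₂ f) := by
  set S := normSq α₁ + normSq β₁ + normSq α₂ + normSq β₂ with hS
  have hsum : (∑ k ∈ range n, w (n-1) k *
        (((k+1:ℕ):ℝ)^2 * normSq (f (k+1)) + ((n-k:ℕ):ℝ)^2 * normSq (f k)))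
      = (n:ℝ) * Nsq n f := by
    have e : ∀ k ∈ range n, w (n-1) k *
        (((k+1:ℕ):ℝ)^2 * normSq (f (k+1)) + ((n-k:ℕ):ℝ)^2 * normSq (f k))
        = ((k+1:ℕ):ℝ)^2 * w (n-1) k * normSq (f (k+1))
          + ((n-k:ℕ):ℝ)^2 * w (n-1) k * normSq (f k) := fun k _ => by ring
    rw [Finset.sum_congr rfl e, Finset.sum_add_distrib, lemT1, lemT2,
      ← Finset.sum_add_distrib]
    unfold Nsq
    rw [Finset.mul_sum]
    refine Finset.sum_congr rfl fun j hj => ?_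
    have hjn : j ≤ n := Nat.lt_succ_iff.mp (Finset.mem_range.mp hj)
    have : ((j:ℕ):ℝ) + ((n-j:ℕ):ℝ) = (n:ℝ) := by
      have : j + (n - j) = n := by omega
      exact_mod_cast congrArg (Nat.cast : ℕ → ℝ) this
    rw [← this]; ring
  rw [← hsum, Finset.mul_sum]
  have key : ∀ k ∈ range n,
      normSq (α₁*β₂ - α₂*β₁) * (w (n-1) k *
          (((k+1:ℕ):ℝ)^2 * normSq (f (k+1)) + ((n-k:ℕ):ℝ)^2 * normSq (f k)))
        ≤ S * (w (n-1) k * (normSq (derL n α₁ β₁ f k) + normSq (derL n α₂ β₂ f k))) := by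
    intro k hk
    have h := inv2 ((starRingEnd ℂ) α₁) ((starRingEnd ℂ) β₁) ((starRingEnd ℂ) α₂)
      ((starRingEnd ℂ) β₂) (((k+1:ℕ):ℂ) * f (k+1)) (((n-k:ℕ):ℂ) * f k)
    have e1 : (starRingEnd ℂ) α₁ * (starRingEnd ℂ) β₂ - (starRingEnd ℂ) α₂ * (starRingEnd ℂ) β₁
        = (starRingEnd ℂ) (α₁*β₂ - α₂*β₁) := by
      simp [map_mul, map_sub]
    rw [e1, Complex.normSq_conj, Complex.normSq_conj, Complex.normSq_conj,
      Complex.normSq_conj, Complex.normSq_conj] at h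
    have e2 : normSq (((k+1:ℕ):ℂ) * f (k+1)) = ((k+1:ℕ):ℝ)^2 * normSq (f (k+1)) := by
      rw [Complex.normSq_mul, nsq_nat]
    have e3 : normSq (((n-k:ℕ):ℂ) * f k) = ((n-k:ℕ):ℝ)^2 * normSq (f k) := by
      rw [Complex.normSq_mul, nsq_nat]
    rw [e2, e3] at h
    have e4 : (starRingEnd ℂ) α₁ * (((k+1:ℕ):ℂ) * f (k+1))
        + (starRingEnd ℂ) β₁ * (((n-k:ℕ):ℂ) * f k) = derL n α₁ β₁ f k := by
      unfold derL; ring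
    have e5 : (starRingEnd ℂ) α₂ * (((k+1:ℕ):ℂ) * f (k+1))
        + (starRingEnd ℂ) β₂ * (((n-k:ℕ):ℂ) * f k) = derL n α₂ β₂ f k := by
      unfold derL; ring
    rw [e4, e5] at h
    have hw : (0:ℝ) ≤ w (n-1) k := le_of_lt (w_pos _ _)
    calc normSq (α₁*β₂ - α₂*β₁) * (w (n-1) k *
          (((k+1:ℕ):ℝ)^2 * normSq (f (k+1)) + ((n-k:ℕ):ℝ)^2 * normSq (f k)))
        = w (n-1) k * (normSq (α₁*β₂ - α₂*β₁) *
          (((k+1:ℕ):ℝ)^2 * normSq (f (k+1)) + ((n-k:ℕ):ℝ)^2 * normSq (f k))) := by ring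
      _ ≤ w (n-1) k * (S * (normSq (derL n α₁ β₁ f k) + normSq (derL n α₂ β₂ f k))) :=
          mul_le_mul_of_nonneg_left h hw
      _ = S * (w (n-1) k * (normSq (derL n α₁ β₁ f k) + normSq (derL n α₂ β₂ f k))) := by ring
  calc (∑ k ∈ range n, normSq (α₁*β₂ - α₂*β₁) * (w (n-1) k *
        (((k+1:ℕ):ℝ)^2 * normSq (f (k+1)) + ((n-k:ℕ):ℝ)^2 * normSq (f k))))
      ≤ ∑ k ∈ range n, S * (w (n-1) k
          * (normSq (derL n α₁ β₁ f k) + normSq (derL n α₂ β₂ f k))) :=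
        Finset.sum_le_sum key
    _ = S * (Dsq n α₁ β₁ f + Dsq n α₂ β₂ f) := by
        rw [← Finset.mul_sum]
        congr 1
        unfold Dsq
        rw [← Finset.sum_add_distrib]
        exact Finset.sum_congr rfl fun k _ => by ring

lemma lemE (n : ℕ) (α₁ β₁ α₂ β₂ : ℂ) (f : ℕ → ℂ) (k : ℕ) (hk : k ≤ n) :
    derL (n+1) α₁ β₁ (mulL α₂ β₂ f) k
      = ((starRingEnd ℂ) α₁ * α₂ + (starRingEnd ℂ) β₁ * β₂) * f k
        + mulL α₂ β₂ (derL n α₁ β₁ f) k := by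
  rcases Nat.eq_zero_or_pos k with rfl | hk0
  · show (starRingEnd ℂ) α₁ * ((0+1:ℕ):ℂ) * (mulL α₂ β₂ f (0+1))
        + (starRingEnd ℂ) β₁ * ((n+1-0:ℕ):ℂ) * (mulL α₂ β₂ f 0) = _
    have h1 : mulL α₂ β₂ f 1 = α₂ * f 0 + β₂ * f 1 := by simp [mulL, sh]
    have h0 : mulL α₂ β₂ f 0 = β₂ * f 0 := by simp [mulL, sh]
    have h2 : mulL α₂ β₂ (derL n α₁ β₁ f) 0 = β₂ * derL n α₁ β₁ f 0 := by simp [mulL, sh]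
    rw [h1, h0, h2]
    show _ = _ + β₂ * ((starRingEnd ℂ) α₁ * ((0+1:ℕ):ℂ) * f (0+1)
        + (starRingEnd ℂ) β₁ * ((n-0:ℕ):ℂ) * f 0)
    have : ((n+1-0:ℕ):ℂ) = ((n-0:ℕ):ℂ) + 1 := by
      have : n+1-0 = (n-0)+1 := by omega
      rw [this]; push_cast; ring
    rw [this]; push_cast; ring
  · obtain ⟨j, rfl⟩ : ∃ j, k = j+1 := ⟨k-1, by omega⟩
    have hjn : j + 1 ≤ n := hk
    show (starRingEnd ℂ) α₁ * ((j+1+1:ℕ):ℂ) * (mulL α₂ β₂ f (j+1+1))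
        + (starRingEnd ℂ) β₁ * ((n+1-(j+1):ℕ):ℂ) * (mulL α₂ β₂ f (j+1)) = _
    have h1 : mulL α₂ β₂ f (j+1+1) = α₂ * f (j+1) + β₂ * f (j+1+1) := by simp [mulL, sh]
    have h2 : mulL α₂ β₂ f (j+1) = α₂ * f j + β₂ * f (j+1) := by simp [mulL, sh]
    have h3 : mulL α₂ β₂ (derL n α₁ β₁ f) (j+1)
        = α₂ * derL n α₁ β₁ f j + β₂ * derL n α₁ β₁ f (j+1) := by simp [mulL, sh]
    rw [h1, h2, h3]
    show _ = _ + (α₂ * ((starRingEnd ℂ) α₁ * ((j+1:ℕ):ℂ) * f (j+1)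
          + (starRingEnd ℂ) β₁ * ((n-j:ℕ):ℂ) * f j)
        + β₂ * ((starRingEnd ℂ) α₁ * ((j+1+1:ℕ):ℂ) * f (j+1+1)
          + (starRingEnd ℂ) β₁ * ((n-(j+1):ℕ):ℂ) * f (j+1)))
    have c1 : ((n+1-(j+1):ℕ):ℂ) = ((n-(j+1):ℕ):ℂ) + 1 := by
      have : n+1-(j+1) = (n-(j+1)) + 1 := by omega
      rw [this]; push_cast; ring
    have c2 : ((n-j:ℕ):ℂ) = ((n-(j+1):ℕ):ℂ) + 1 := by
      have : n-j = (n-(j+1)) + 1 := by omega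
      rw [this]; push_cast; ring
    rw [c1, c2]; push_cast; ring

def V (n : ℕ) (f : ℕ → ℂ) : EuclideanSpace ℂ (Fin (n+1)) :=
  WithLp.toLp 2 (fun i : Fin (n+1) => ((Real.sqrt (w n i) : ℝ) : ℂ) * f i)

lemma normV (n : ℕ) (f : ℕ → ℂ) : ‖V n f‖^2 = Nsq n f := by
  rw [EuclideanSpace.norm_eq, Real.sq_sqrt (by positivity)]
  unfold Nsq V
  simp only [PiLp.toLp_apply]
  rw [Fin.sum_univ_eq_sum_range (fun i => ‖((Real.sqrt (w n i) : ℝ) : ℂ) * f i‖^2) (n+1)]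
  refine Finset.sum_congr rfl fun k _ => ?_
  rw [norm_mul, mul_pow, Complex.norm_real, Real.norm_eq_abs,
    _root_.abs_of_nonneg (Real.sqrt_nonneg _), Real.sq_sqrt (le_of_lt (w_pos _ _))]
  rw [← Complex.normSq_eq_norm_sq]

lemma sqrtNsq (n : ℕ) (f : ℕ → ℂ) : Real.sqrt (Nsq n f) = ‖V n f‖ := by
  rw [← normV, Real.sqrt_sq (norm_nonneg _)]

lemma nsq_smul (n : ℕ) (t : ℂ) (f : ℕ → ℂ) :
    Nsq n (fun k => t * f k) = normSq t * Nsq n f := by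
  unfold Nsq
  rw [Finset.mul_sum]
  exact Finset.sum_congr rfl fun k _ => by rw [Complex.normSq_mul]; ring

lemma nsq_tri_lower (n : ℕ) (g h : ℕ → ℂ) :
    Real.sqrt (Nsq n h) - Real.sqrt (Nsq n g)
      ≤ Real.sqrt (Nsq n (fun k => g k + h k)) := by
  rw [sqrtNsq, sqrtNsq, sqrtNsq]
  have hadd : V n (fun k => g k + h k) = V n g + V n h := by
    ext i
    show ((Real.sqrt (w n i) : ℝ) : ℂ) * (g i + h i) = (V n g + V n h) i
    have : (V n g + V n h) i = V n g i + V n h i := rfl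
    rw [this]
    show _ = ((Real.sqrt (w n i) : ℝ) : ℂ) * g i + ((Real.sqrt (w n i) : ℝ) : ℂ) * h i
    ring
  rw [hadd]
  have := norm_sub_norm_le (V n h) (-(V n g))
  rw [norm_neg, sub_neg_eq_add] at this
  calc ‖V n h‖ - ‖V n g‖ ≤ ‖V n h + V n g‖ := this
    _ = ‖V n g + V n h‖ := by rw [add_comm (V n h) (V n g)]

lemma mulL_mulL (α₁ β₁ α₂ β₂ : ℂ) (f : ℕ → ℂ) (k : ℕ) :
    mulL α₁ β₁ (mulL α₂ β₂ f) k
      = (α₁*α₂) * sh (sh f) k + (α₁*β₂ + β₁*α₂) * sh f k + (β₁*β₂) * f k := by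
  rcases Nat.eq_zero_or_pos k with rfl | hk0
  · simp [mulL, sh]; ring
  · obtain ⟨j, rfl⟩ : ∃ j, k = j+1 := ⟨k-1, by omega⟩
    rcases Nat.eq_zero_or_pos j with rfl | hj0
    · simp [mulL, sh]; ring
    · obtain ⟨i, rfl⟩ : ∃ i, j = i+1 := ⟨j-1, by omega⟩
      simp [mulL, sh]; ring


set_option maxHeartbeats 2000000 in
lemma arith (L₁ L₂ S E e T nf x2 y2 D H2 PF mr : ℝ)
    (hL₁ : 0 < L₁) (hL₂ : 0 < L₂) (hS : 0 < S)
    (heS : e * S = E) (hT : 0 ≤ T)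
    (hnf0 : 0 ≤ nf) (hx20 : 0 ≤ x2) (hy20 : 0 ≤ y2) (hD0 : 0 ≤ D)
    (hmr : 0 ≤ mr) (hH20 : 0 ≤ H2)
    (hPF : PF = L₁ * (L₂ * nf + y2) + D)
    (hEu : E * (mr * nf) ≤ S * (x2 + y2))
    (htri : Real.sqrt H2 - T * Real.sqrt nf ≤ Real.sqrt D)
    (hH2 : L₂ * x2 ≤ H2) :
    min (min (L₁ * e / 2) (L₂ * e / 8)) (L₁ * L₂ * (L₂ * e) / (8 * (T+1)^2)) * (mr * nf)
      ≤ PF := by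
  set Ksq := min (min (L₁ * e / 2) (L₂ * e / 8)) (L₁ * L₂ * (L₂ * e) / (8 * (T+1)^2)) with hKd
  have hK1 : Ksq ≤ L₁ * e / 2 := le_trans (min_le_left _ _) (min_le_left _ _)
  have hK2 : Ksq ≤ L₂ * e / 8 := le_trans (min_le_left _ _) (min_le_right _ _)
  have hK3 : Ksq ≤ L₁ * L₂ * (L₂ * e) / (8 * (T+1)^2) := min_le_right _ _
  clear_value Ksq
  clear hKd
  have hmnf : (0:ℝ) ≤ mr * nf := mul_nonneg hmr hnf0
  by_cases hy : e * (mr * nf) / 2 ≤ y2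
  · calc Ksq * (mr * nf) ≤ (L₁ * e / 2) * (mr * nf) :=
          mul_le_mul_of_nonneg_right hK1 hmnf
      _ = L₁ * (e * (mr * nf) / 2) := by ring
      _ ≤ L₁ * y2 := mul_le_mul_of_nonneg_left hy (le_of_lt hL₁)
      _ ≤ PF := by
          rw [hPF]
          nlinarith [mul_nonneg (mul_nonneg (le_of_lt hL₁) (le_of_lt hL₂)) hnf0, hD0]
  · push_neg at hy
    have hx : e * (mr * nf) / 2 ≤ x2 := by
      by_contra hcon
      push_neg at hcon
      have h1 := mul_lt_mul_of_pos_left hcon hS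
      have h2 := mul_lt_mul_of_pos_left hy hS
      have heS2 : (e*S)*(mr*nf) = E*(mr*nf) := by rw [heS]
      nlinarith [hEu]
    by_cases hb : 2*(T+1)*Real.sqrt nf ≤ Real.sqrt (L₂ * x2)
    · -- Case B1
      have s1 : Real.sqrt (L₂*x2) ≤ Real.sqrt H2 := Real.sqrt_le_sqrt hH2
      have hsnf : 0 ≤ Real.sqrt nf := Real.sqrt_nonneg _
      have s2 : Real.sqrt (L₂*x2)/2 ≤ Real.sqrt D := by linarith
      have h3 : L₂ * x2 / 4 ≤ D := by
        have hD' : Real.sqrt D ^ 2 = D := Real.sq_sqrt hD0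
        have hx' : Real.sqrt (L₂ * x2) ^ 2 = L₂ * x2 :=
          Real.sq_sqrt (mul_nonneg (le_of_lt hL₂) hx20)
        nlinarith [Real.sqrt_nonneg (L₂ * x2), Real.sqrt_nonneg D, s2]
      calc Ksq * (mr * nf) ≤ (L₂ * e / 8) * (mr * nf) :=
            mul_le_mul_of_nonneg_right hK2 hmnf
        _ = L₂ * (e * (mr * nf) / 2) / 4 := by ring
        _ ≤ L₂ * x2 / 4 := by
            have := mul_le_mul_of_nonneg_left hx (le_of_lt hL₂)
            linarith
        _ ≤ D := h3
        _ ≤ PF := by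
            rw [hPF]
            nlinarith [mul_nonneg (mul_nonneg (le_of_lt hL₁) (le_of_lt hL₂)) hnf0,
              mul_nonneg (le_of_lt hL₁) hy20]
    · -- Case B2
      push_neg at hb
      have hnfpos : 0 < nf := by
        by_contra hcon
        push_neg at hcon
        have hnf' : nf = 0 := le_antisymm hcon hnf0
        rw [hnf', Real.sqrt_zero, mul_zero] at hb
        exact absurd hb (not_lt.mpr (Real.sqrt_nonneg _))
      have hsq : L₂ * x2 < 4*(T+1)^2 * nf := by
        have h1 : Real.sqrt (L₂ * x2) ^ 2 = L₂ * x2 :=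
          Real.sq_sqrt (mul_nonneg (le_of_lt hL₂) hx20)
        have h2 : (2*(T+1)*Real.sqrt nf)^2 = 4*(T+1)^2*nf := by
          rw [mul_pow, mul_pow, Real.sq_sqrt hnf0]; ring
        have h3 : Real.sqrt (L₂ * x2) ^ 2 < (2*(T+1)*Real.sqrt nf)^2 :=
          pow_lt_pow_left₀ hb (Real.sqrt_nonneg _) (by norm_num)
        rw [h1, h2] at h3
        exact h3
      have h8 : L₂ * (e * mr) ≤ 8*(T+1)^2 := by
        by_contra hcon
        push_neg at hcon
        have h1 := mul_lt_mul_of_pos_right hcon hnfpos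
        have h2 := mul_le_mul_of_nonneg_left hx (le_of_lt hL₂)
        nlinarith
      have hdenom : (0:ℝ) < 8*(T+1)^2 := by positivity
      have e1 : Ksq * (mr*nf) ≤ (L₁ * L₂ * (L₂ * e) / (8 * (T+1)^2)) * (mr*nf) :=
        mul_le_mul_of_nonneg_right hK3 hmnf
      have e2 : (L₁ * L₂ * (L₂ * e) / (8 * (T+1)^2)) * (mr*nf)
          = (L₁ * (L₂ * nf)) * ((L₂ * (e * mr)) / (8*(T+1)^2)) := by
        have hnum : (L₁ * L₂ * (L₂ * e)) * (mr*nf) = (L₁ * (L₂ * nf)) * (L₂ * (e * mr)) := by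
          ring
        rw [div_mul_eq_mul_div, hnum, mul_div_assoc]
      have e3 : (L₂ * (e * mr)) / (8*(T+1)^2) ≤ 1 := (div_le_one hdenom).mpr h8
      have e4 : 0 ≤ L₁ * (L₂ * nf) := by positivity
      calc Ksq * (mr*nf) ≤ (L₁ * (L₂ * nf)) * ((L₂ * (e * mr)) / (8*(T+1)^2)) := by
            rw [← e2]; exact e1
        _ ≤ (L₁ * (L₂ * nf)) * 1 := mul_le_mul_of_nonneg_left e3 e4
        _ = L₁ * (L₂ * nf) := by ring
        _ ≤ PF := by
            rw [hPF]
            nlinarith [mul_nonneg (le_of_lt hL₁) hy20]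

set_option maxHeartbeats 2000000 in
lemma core (α₁ β₁ α₂ β₂ : ℂ) (hdet : α₁*β₂ - α₂*β₁ ≠ 0) :
    ∃ K : ℝ, 0 < K ∧ ∀ m : ℕ, 1 ≤ m → ∀ F : ℕ → ℂ, (∀ k, m < k → F k = 0) →
      K * ((m:ℝ) * Nsq m F) ≤ Nsq (m+1+1) (mulL α₁ β₁ (mulL α₂ β₂ F)) := by
  set L₁ := normSq α₁ + normSq β₁ with hL₁d
  set L₂ := normSq α₂ + normSq β₂ with hL₂d
  set S := normSq α₁ + normSq β₁ + normSq α₂ + normSq β₂ with hSd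
  set E := normSq (α₁*β₂ - α₂*β₁) with hEd
  have hE : 0 < E := Complex.normSq_pos.mpr hdet
  have hL₁ : 0 < L₁ := by
    rcases lt_or_ge 0 L₁ with h | h
    · exact h
    · exfalso
      have h1 : normSq α₁ = 0 := le_antisymm (by
        have := normSq_nonneg β₁; rw [hL₁d] at h; linarith) (normSq_nonneg α₁)
      have h2 : normSq β₁ = 0 := le_antisymm (by
        have := normSq_nonneg α₁; rw [hL₁d] at h; linarith) (normSq_nonneg β₁)
      have e1 : α₁ = 0 := normSq_eq_zero.mp h1
      have e2 : β₁ = 0 := normSq_eq_zero.mp h2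
      apply hdet; rw [e1, e2]; ring
  have hL₂ : 0 < L₂ := by
    rcases lt_or_ge 0 L₂ with h | h
    · exact h
    · exfalso
      have h1 : normSq α₂ = 0 := le_antisymm (by
        have := normSq_nonneg β₂; rw [hL₂d] at h; linarith) (normSq_nonneg α₂)
      have h2 : normSq β₂ = 0 := le_antisymm (by
        have := normSq_nonneg α₂; rw [hL₂d] at h; linarith) (normSq_nonneg β₂)
      have e1 : α₂ = 0 := normSq_eq_zero.mp h1
      have e2 : β₂ = 0 := normSq_eq_zero.mp h2
      apply hdet; rw [e1, e2]; ring
  have hS : 0 < S := by rw [hSd]; rw [hL₁d] at hL₁; rw [hL₂d] at hL₂; linarith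
  set e := E / S with hed
  have he : 0 < e := div_pos hE hS
  have heS : e * S = E := div_mul_cancel₀ E (ne_of_gt hS)
  set t := (starRingEnd ℂ) α₁ * α₂ + (starRingEnd ℂ) β₁ * β₂ with htd
  set T := Real.sqrt (normSq t) with hTd
  have hT : 0 ≤ T := Real.sqrt_nonneg _
  set Ksq := min (min (L₁ * e / 2) (L₂ * e / 8)) (L₁ * L₂ * (L₂ * e) / (8 * (T+1)^2)) with hKd
  have hKpos : 0 < Ksq := by
    apply lt_min (lt_min (by positivity) (by positivity)) (by positivity)
  have hK1 : Ksq ≤ L₁ * e / 2 := le_trans (min_le_left _ _) (min_le_left _ _)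
  have hK2 : Ksq ≤ L₂ * e / 8 := le_trans (min_le_left _ _) (min_le_right _ _)
  have hK3 : Ksq ≤ L₁ * L₂ * (L₂ * e) / (8 * (T+1)^2) := min_le_right _ _
  refine ⟨Ksq, hKpos, ?_⟩
  intro m hm F hF
  set nf := Nsq m F with hnfd
  have hnf0 : 0 ≤ nf := Nsq_nonneg _ _
  have Zg : ∀ k, m+1 < k → mulL α₂ β₂ F k = 0 := by
    intro k hk
    show α₂ * sh F k + β₂ * F k = 0
    have h1 : F k = 0 := hF k (by omega)
    have h2 : sh F k = 0 := by
      unfold sh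
      rw [if_neg (by omega : ¬ k = 0)]
      exact hF _ (by omega)
    rw [h1, h2, mul_zero, mul_zero, add_zero]
  have ZD : ∀ k, m - 1 < k → derL m α₁ β₁ F k = 0 := by
    intro k hk
    have hkm : m ≤ k := by omega
    show (starRingEnd ℂ) α₁ * ((k+1:ℕ):ℂ) * F (k+1)
        + (starRingEnd ℂ) β₁ * ((m-k:ℕ):ℂ) * F k = 0
    have h1 : F (k+1) = 0 := hF _ (by omega)
    have h2 : (starRingEnd ℂ) β₁ * ((m-k:ℕ):ℂ) * F k = 0 := by
      rcases Nat.eq_or_lt_of_le hkm with h | h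
      · have : m - k = 0 := by omega
        rw [this]; simp
      · rw [hF k h]; ring
    rw [h1, h2, mul_zero, add_zero]
  have A2 : Nsq (m+1+1) (mulL α₁ β₁ (mulL α₂ β₂ F))
      = L₁ * Nsq (m+1) (mulL α₂ β₂ F) + Dsq (m+1) α₁ β₁ (mulL α₂ β₂ F) :=
    lemA (m+1) α₁ β₁ _ Zg
  have A1 : Nsq (m+1) (mulL α₂ β₂ F) = L₂ * nf + Dsq m α₂ β₂ F := lemA m α₂ β₂ F hF
  set x2 := Dsq m α₁ β₁ F with hx2d
  set y2 := Dsq m α₂ β₂ F with hy2d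
  have hx20 : 0 ≤ x2 := Dsq_nonneg _ _ _ _
  have hy20 : 0 ≤ y2 := Dsq_nonneg _ _ _ _
  have hEu : E * ((m:ℝ) * nf) ≤ S * (x2 + y2) := lemB m α₁ β₁ α₂ β₂ F
  set D := Dsq (m+1) α₁ β₁ (mulL α₂ β₂ F) with hDd
  have hD0 : 0 ≤ D := Dsq_nonneg _ _ _ _
  set h₂ := mulL α₂ β₂ (derL m α₁ β₁ F) with hh₂d
  have Dexp : D = Nsq m (fun k => t * F k + h₂ k) := by
    rw [hDd, hh₂d]
    unfold Dsq Nsq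
    refine Finset.sum_congr rfl fun k hk => ?_
    have hkm : k ≤ m := Nat.lt_succ_iff.mp (Finset.mem_range.mp hk)
    rw [lemE m α₁ β₁ α₂ β₂ F k hkm]
    simp only [Nat.add_sub_cancel]
    rfl
  have hm1 : m - 1 + 1 = m := by omega
  have hH2 : L₂ * x2 ≤ Nsq m h₂ := by
    have hA : Nsq ((m-1)+1) (mulL α₂ β₂ (derL m α₁ β₁ F))
        = L₂ * Nsq (m-1) (derL m α₁ β₁ F) + Dsq (m-1) α₂ β₂ (derL m α₁ β₁ F) :=
      lemA (m-1) α₂ β₂ _ ZD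
    rw [hm1] at hA
    have hx2eq : Nsq (m-1) (derL m α₁ β₁ F) = x2 := by
      rw [hx2d]
      unfold Nsq Dsq
      rw [hm1]
    rw [hh₂d, hA, hx2eq]
    have := Dsq_nonneg (m-1) α₂ β₂ (derL m α₁ β₁ F)
    linarith
  have htF : Real.sqrt (Nsq m (fun k => t * F k)) = T * Real.sqrt nf := by
    rw [nsq_smul, Real.sqrt_mul (normSq_nonneg t), hTd, hnfd]
  have htri : Real.sqrt (Nsq m h₂) - T * Real.sqrt nf ≤ Real.sqrt D := by
    rw [Dexp, ← htF]
    exact nsq_tri_lower m (fun k => t * F k) h₂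
  have hPF : Nsq (m+1+1) (mulL α₁ β₁ (mulL α₂ β₂ F)) = L₁ * (L₂ * nf + y2) + D := by
    rw [A2, A1]
  rw [hKd]
  exact arith L₁ L₂ S E e T nf x2 y2 D (Nsq m h₂)
    (Nsq (m+1+1) (mulL α₁ β₁ (mulL α₂ β₂ F))) (m:ℝ)
    hL₁ hL₂ hS heS hT hnf0 hx20 hy20 hD0 (Nat.cast_nonneg m) (Nsq_nonneg _ _)
    hPF hEu htri hH2

noncomputable def fd (k j : ℕ) : Fin 2 →₀ ℕ := Finsupp.single 0 k + Finsupp.single 1 j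

lemma fd_apply0 (k j : ℕ) : fd k j 0 = k := by simp [fd, Finsupp.single_apply]
lemma fd_apply1 (k j : ℕ) : fd k j 1 = j := by simp [fd, Finsupp.single_apply]

lemma eq_fd (α : Fin 2 →₀ ℕ) : α = fd (α 0) (α 1) := by
  ext i
  fin_cases i <;> simp [fd, Finsupp.single_apply]

lemma mfact_fd (k j : ℕ) : mfact (fd k j) = k.factorial * j.factorial := by
  unfold mfact
  rw [Fin.prod_univ_two, fd_apply0, fd_apply1]

lemma weight_fin2 (α : Fin 2 →₀ ℕ) : (Finsupp.weight 1) α = α 0 + α 1 := by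
  rw [show (Finsupp.weight 1 : (Fin 2 →₀ ℕ) →+ ℕ) = Finsupp.weight (fun _ => 1) from rfl,
    ← Finsupp.degree_eq_weight_one]
  rw [Finsupp.degree_apply]
  rw [← Fin.sum_univ_two (fun i => α i)]
  exact Finset.sum_subset (Finset.subset_univ _)
    (fun i _ hi => Finsupp.notMem_support_iff.mp hi)

lemma hcoeff {n : ℕ} {p : MvPolynomial (Fin 2) ℂ} (hp : p.IsHomogeneous n)
    (α : Fin 2 →₀ ℕ) (h : α 0 + α 1 ≠ n) : p.coeff α = 0 := by
  by_contra hc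
  exact h (by rw [← weight_fin2]; exact hp hc)

lemma normsq_homog (n : ℕ) (p : MvPolynomial (Fin 2) ℂ) (hp : p.IsHomogeneous n) :
    apolarNormSq p = ∑ k ∈ range (n+1), w n k * normSq (p.coeff (fd k (n-k))) := by
  unfold apolarNormSq
  have hsub : p.support ⊆ (range (n+1)).image (fun k => fd k (n-k)) := by
    intro α hα
    have hc : p.coeff α ≠ 0 := (MvPolynomial.mem_support_iff).mp hα
    have hdeg : α 0 + α 1 = n := by rw [← weight_fin2]; exact hp hc
    rw [Finset.mem_image]
    exact ⟨α 0, Finset.mem_range.mpr (by omega), by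
      rw [show n - α 0 = α 1 by omega]; exact (eq_fd α).symm⟩
  rw [Finset.sum_subset hsub (fun α _ hα => by
    rw [MvPolynomial.notMem_support_iff.mp hα]
    simp)]
  rw [Finset.sum_image (fun x _ y _ hxy => by
    have := congrArg (fun (φ : Fin 2 →₀ ℕ) => φ 0) hxy
    simpa [fd_apply0] using this)]
  refine Finset.sum_congr rfl fun k _ => ?_
  rw [mfact_fd, Complex.sq_norm]
  unfold w
  push_cast
  ring

lemma fd_sub0 (k j : ℕ) : fd k j - Finsupp.single 0 1 = fd (k-1) j := by
  ext i
  fin_cases i <;> simp [fd, Finsupp.single_apply, Finsupp.tsub_apply]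

lemma fd_sub1 (k j : ℕ) : fd k j - Finsupp.single 1 1 = fd k (j-1) := by
  ext i
  fin_cases i <;> simp [fd, Finsupp.single_apply, Finsupp.tsub_apply]

lemma mem0 (k j : ℕ) : (0 : Fin 2) ∈ (fd k j).support ↔ k ≠ 0 := by
  rw [Finsupp.mem_support_iff, fd_apply0]

lemma mem1 (k j : ℕ) : (1 : Fin 2) ∈ (fd k j).support ↔ j ≠ 0 := by
  rw [Finsupp.mem_support_iff, fd_apply1]

lemma coeff_prod (a b c : ℂ) (m : ℕ) (f : MvPolynomial (Fin 2) ℂ) (hf : f.IsHomogeneous m)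
    (k : ℕ) (hk : k ≤ m+2) :
    ((C a * X 0 ^ 2 + C b * X 0 * X 1 + C c * X (1:Fin 2) ^ 2) * f).coeff (fd k (m+2-k))
      = a * sh (sh (fun j => f.coeff (fd j (m-j)))) k
        + b * sh (fun j => f.coeff (fd j (m-j))) k
        + c * (fun j => f.coeff (fd j (m-j))) k := by
  set F := fun j => f.coeff (fd j (m-j)) with hFd
  have hF0 : ∀ j, m < j → F j = 0 := fun j hj =>
    hcoeff hf _ (by rw [fd_apply0, fd_apply1]; omega)
  have hP : (C a * X 0 ^ 2 + C b * X 0 * X 1 + C c * X (1:Fin 2) ^ 2) * f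
      = C a * (f * X 0 * X 0) + (C b * (f * X 0 * X 1) + C c * (f * X 1 * X 1)) := by
    ring
  rw [hP, coeff_add, coeff_add, coeff_C_mul, coeff_C_mul, coeff_C_mul]
  have hA : (f * X 0 * X 0).coeff (fd k (m+2-k)) = sh (sh F) k := by
    rw [coeff_mul_X']
    by_cases hk0 : k = 0
    · subst hk0
      rw [if_neg (by rw [mem0]; omega)]
      simp [sh]
    · rw [if_pos ((mem0 _ _).mpr hk0), fd_sub0, coeff_mul_X']
      by_cases hk1 : k = 1
      · subst hk1
        rw [if_neg (by rw [mem0]; omega)]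
        simp [sh]
      · rw [if_pos ((mem0 _ _).mpr (by omega)), fd_sub0]
        have h1 : sh (sh F) k = F (k-1-1) := by
          unfold sh
          rw [if_neg hk0, if_neg (by omega : ¬ k-1 = 0)]
        rw [h1, hFd]
        have : m+2-k = m - (k-1-1) := by omega
        rw [this]
  have hB : (f * X 0 * X 1).coeff (fd k (m+2-k)) = sh F k := by
    rw [coeff_mul_X']
    by_cases hkm : k = m+2
    · subst hkm
      rw [if_neg (by rw [mem1]; omega)]
      have : sh F (m+2) = F (m+1) := by
        unfold sh
        rw [if_neg (by omega)]
        norm_num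
      rw [this, hF0 _ (by omega)]
      
    · rw [if_pos ((mem1 _ _).mpr (by omega)), fd_sub1, coeff_mul_X']
      by_cases hk0 : k = 0
      · subst hk0
        rw [if_neg (by rw [mem0]; omega)]
        simp [sh]
      · rw [if_pos ((mem0 _ _).mpr hk0), fd_sub0]
        have h1 : sh F k = F (k-1) := by unfold sh; rw [if_neg hk0]
        rw [h1, hFd]
        have : m+2-k-1 = m - (k-1) := by omega
        rw [this]
  have hC : (f * X 1 * X 1).coeff (fd k (m+2-k)) = F k := by
    rw [coeff_mul_X']
    by_cases hkm : k = m+2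
    · subst hkm
      rw [if_neg (by rw [mem1]; omega)]
      exact (hF0 _ (by omega)).symm
    · rw [if_pos ((mem1 _ _).mpr (by omega)), fd_sub1, coeff_mul_X']
      by_cases hkm1 : k = m+1
      · subst hkm1
        rw [if_neg (by rw [mem1]; omega)]
        exact (hF0 _ (by omega)).symm
      · rw [if_pos ((mem1 _ _).mpr (by omega)), fd_sub1, hFd]
        have : m+2-k-1-1 = m - k := by omega
        rw [this]
  rw [hA, hB, hC]
  ring

lemma quadFactor (a b c : ℂ) (h : 4*a*c ≠ b^2) :
    ∃ α₁ β₁ α₂ β₂ : ℂ, a = α₁*α₂ ∧ b = α₁*β₂ + β₁*α₂ ∧ c = β₁*β₂ ∧ α₁*β₂ - α₂*β₁ ≠ 0 := by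
  by_cases ha : a = 0
  · refine ⟨0, 1, b, c, by rw [ha]; ring, by ring, by ring, ?_⟩
    intro hd
    apply h
    have hb : b = 0 := by
      have : -b = 0 := by rw [← hd]; ring
      linear_combination -this
    rw [ha, hb]; ring
  · obtain ⟨s, hs⟩ := IsAlgClosed.exists_pow_nat_eq (b^2 - 4*a*c) (n:=2) (by norm_num)
    have hs0 : s ≠ 0 := by
      intro h0
      rw [h0] at hs
      apply h
      have : (0:ℂ) = b^2 - 4*a*c := by rw [← hs]; ring
      linear_combination this
    refine ⟨a, (b-s)/2, 1, (b+s)/(2*a), by ring, by field_simp; ring, ?_, ?_⟩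
    · field_simp
      linear_combination hs
    · have he : a*((b+s)/(2*a)) - 1*((b-s)/2) = s := by field_simp; ring
      rw [he]
      exact hs0

end KSproof

/-- If P = a z1^2 + b z1 z2 + c z2^2 is nonzero and 4ac ≠ b^2, then P satisfies
the Khavinson-Shapiro bounds. -/
theorem stmt10 (a b c : ℂ) (h0 : ¬(a = 0 ∧ b = 0 ∧ c = 0)) (h : 4 * a * c ≠ b ^ 2) :
    ∃ K : ℝ, 0 < K ∧ ∀ m : ℕ, 1 ≤ m → ∀ f : MvPolynomial (Fin 2) ℂ, f.IsHomogeneous m →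
      K * Real.sqrt m * apolarNorm f ≤
        apolarNorm ((C a * X (0 : Fin 2) ^ 2 + C b * X (0 : Fin 2) * X 1 + C c * X 1 ^ 2) * f) := by
  obtain ⟨α₁, β₁, α₂, β₂, ha, hb, hc, hdet⟩ := quadFactor a b c h
  obtain ⟨Ksq, hKsq, hcore⟩ := core α₁ β₁ α₂ β₂ hdet
  refine ⟨Real.sqrt Ksq, Real.sqrt_pos.mpr hKsq, ?_⟩
  intro m hm f hf
  set F := fun j => f.coeff (fd j (m-j)) with hFd
  have hF0 : ∀ j, m < j → F j = 0 := fun j hj =>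
    hcoeff hf _ (by rw [fd_apply0, fd_apply1]; omega)
  have hfn : apolarNormSq f = Nsq m F := by
    rw [normsq_homog m f hf]
    rfl
  have h1 : (C a * X 0 ^ 2 : MvPolynomial (Fin 2) ℂ).IsHomogeneous 2 := by
    have := (isHomogeneous_C (Fin 2) a).mul ((isHomogeneous_X ℂ (0:Fin 2)).pow 2)
    simpa using this
  have h2 : (C b * X 0 * X 1 : MvPolynomial (Fin 2) ℂ).IsHomogeneous 2 := by
    have := ((isHomogeneous_C (Fin 2) b).mul (isHomogeneous_X ℂ (0:Fin 2))).mul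
      (isHomogeneous_X ℂ (1:Fin 2))
    simpa using this
  have h3 : (C c * X 1 ^ 2 : MvPolynomial (Fin 2) ℂ).IsHomogeneous 2 := by
    have := (isHomogeneous_C (Fin 2) c).mul ((isHomogeneous_X ℂ (1:Fin 2)).pow 2)
    simpa using this
  have hP2 : (C a * X 0 ^ 2 + C b * X 0 * X 1 + C c * X (1:Fin 2) ^ 2).IsHomogeneous 2 :=
    (h1.add h2).add h3
  have hPf : ((C a * X 0 ^ 2 + C b * X 0 * X 1 + C c * X (1:Fin 2) ^ 2) * f).IsHomogeneous
      (m+2) := by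
    have := hP2.mul hf
    simpa [add_comm] using this
  have hPF : apolarNormSq ((C a * X 0 ^ 2 + C b * X 0 * X 1 + C c * X (1:Fin 2) ^ 2) * f)
      = Nsq (m+1+1) (mulL α₁ β₁ (mulL α₂ β₂ F)) := by
    rw [normsq_homog (m+2) _ hPf]
    show (∑ k ∈ Finset.range (m+2+1), w (m+2) k
        * Complex.normSq (((C a * X 0 ^ 2 + C b * X 0 * X 1 + C c * X (1:Fin 2) ^ 2) * f).coeff
          (fd k (m+2-k))))
      = ∑ k ∈ Finset.range (m+2+1), w (m+2) k * Complex.normSq (mulL α₁ β₁ (mulL α₂ β₂ F) k)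
    refine Finset.sum_congr rfl fun k hk => ?_
    have hkm : k ≤ m+2 := by
      have := Finset.mem_range.mp hk
      omega
    rw [coeff_prod a b c m f hf k hkm]
    congr 1
    rw [mulL_mulL, ha, hb, hc]
  have hineq := hcore m hm F hF0
  unfold apolarNorm
  rw [hfn, hPF]
  calc Real.sqrt Ksq * Real.sqrt m * Real.sqrt (Nsq m F)
      = Real.sqrt (Ksq * ((m:ℝ) * Nsq m F)) := by
        rw [Real.sqrt_mul (le_of_lt hKsq), Real.sqrt_mul (Nat.cast_nonneg m), mul_assoc]
    _ ≤ Real.sqrt (Nsq (m+1+1) (mulL α₁ β₁ (mulL α₂ β₂ F))) := Real.sqrt_le_sqrt hineq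
end

section
/- For complex numbers a, b, c, the quantity B := (4|a|^2+|b|^2)(|b|^2+4|c|^2) - 4|conj(a)b + conj(b)c|^2 equals (4x-u)^2 + (4y+v)^2, where b^2 = u+iv and conj(a)conj(c) = x+iy. In particular B ≥ 0, and B = 0 if and only if 4ac = b^2. -/
set_option maxHeartbeats 1000000


open MvPolynomial Finset

/-- B = (4|a|^2+|b|^2)(|b|^2+4|c|^2) - 4|conj(a)b + conj(b)c|^2 equals
(4x-u)^2 + (4y+v)^2 with b^2 = u+iv, conj(a)conj(c) = x+iy; in particular B ≥ 0
and B = 0 iff 4ac = b^2. -/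
theorem stmt12 (a b c : ℂ) (B : ℝ)
    (hB : B = (4 * ‖a‖ ^ 2 + ‖b‖ ^ 2) *
          (‖b‖ ^ 2 + 4 * ‖c‖ ^ 2)
        - 4 * ‖(starRingEnd ℂ) a * b + (starRingEnd ℂ) b * c‖ ^ 2) :
    B = (4 * ((starRingEnd ℂ) a * (starRingEnd ℂ) c).re - (b ^ 2).re) ^ 2
        + (4 * ((starRingEnd ℂ) a * (starRingEnd ℂ) c).im + (b ^ 2).im) ^ 2 ∧
    0 ≤ B ∧ (B = 0 ↔ 4 * a * c = b ^ 2) := by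
  have hbre : (b ^ 2).re = b.re * b.re - b.im * b.im := by
    rw [pow_two]; simp [Complex.mul_re]
  have hbim : (b ^ 2).im = b.re * b.im + b.im * b.re := by
    rw [pow_two]; simp [Complex.mul_im]
  have h1 : B = (4 * ((starRingEnd ℂ) a * (starRingEnd ℂ) c).re - (b ^ 2).re) ^ 2
      + (4 * ((starRingEnd ℂ) a * (starRingEnd ℂ) c).im + (b ^ 2).im) ^ 2 := by
    subst hB
    simp only [Complex.sq_norm, Complex.normSq_apply, Complex.mul_re, Complex.mul_im,
      Complex.add_re, Complex.add_im, Complex.conj_re, Complex.conj_im, hbre, hbim]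
    ring
  refine ⟨h1, by rw [h1]; positivity, ?_⟩
  rw [h1]
  simp only [Complex.mul_re, Complex.mul_im, Complex.conj_re, Complex.conj_im]
  rw [Complex.ext_iff]
  simp only [Complex.mul_re, Complex.mul_im, Complex.re_ofNat, Complex.im_ofNat, hbre, hbim]
  constructor
  · intro h
    constructor <;> nlinarith [h, sq_nonneg (4 * (a.re * c.re - -a.im * c.im) - (b.re * b.re - b.im * b.im)), sq_nonneg (4 * (a.re * -c.im + -a.im * c.re) + (b.re * b.im + b.im * b.re))]
  · rintro ⟨h2, h3⟩
    ring_nf at h2 h3 ⊢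
    nlinarith [h2, h3]
end

section
/- (Fischer pair in dimension 1) Let P: ℂ → ℂ be a nonzero polynomial of degree k with leading homogeneous part P_k. Then for every entire function f: ℂ → ℂ there exist unique entire functions q and r with f = P·q + r and P_k*(D) r = 0; moreover r is a polynomial of degree at most k-1 (the Hermite interpolant of f at the zeros of P), and if f has order ρ then q also has order ρ. -/
open Filter Polynomial Metric Set Bornology

noncomputable def MM (f : ℂ → ℂ) (t : ℝ) : ℝ :=
  sSup {x : ℝ | ∃ z : ℂ, ‖z‖ = t ∧ x = ‖f z‖}

/-- The order of growth of an entire function: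
limsup_{r → ∞} log log max_{|z|=r} |f z| / log r. -/
noncomputable def growthOrder (f : ℂ → ℂ) : EReal :=
  Filter.limsup
    (fun r : ℝ =>
      ((Real.log (Real.log (sSup {x : ℝ | ∃ z : ℂ, ‖z‖ = r ∧ x = ‖f z‖}))
          / Real.log r : ℝ) : EReal))
    Filter.atTop

lemma growthOrder_eq (f : ℂ → ℂ) :
    growthOrder f =
      Filter.limsup (fun t : ℝ =>
        ((Real.log (Real.log (MM f t)) / Real.log t : ℝ) : EReal)) atTop := rfl

lemma MM_const {c : ℂ} {t : ℝ} (ht : 0 ≤ t) : MM (fun _ => c) t = ‖c‖ := by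
  have : {x : ℝ | ∃ z : ℂ, ‖z‖ = t ∧ x = ‖c‖} = {‖c‖} := by
    ext x
    simp only [mem_setOf_eq, mem_singleton_iff]
    constructor
    · rintro ⟨z, _, rfl⟩; rfl
    · rintro rfl
      exact ⟨(t:ℂ), by simpa [Complex.norm_real] using abs_of_nonneg ht, rfl⟩
  rw [MM, this, csSup_singleton]

lemma growthOrder_const {f : ℂ → ℂ} {c : ℂ} (h : ∀ z, f z = c) : growthOrder f = 0 := by
  rw [growthOrder_eq]
  have hfc : f = fun _ => c := funext h
  have hcong : (fun t : ℝ => ((Real.log (Real.log (MM f t)) / Real.log t : ℝ) : EReal))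
      =ᶠ[atTop] fun t : ℝ =>
        ((Real.log (Real.log (‖c‖)) / Real.log t : ℝ) : EReal) := by
    filter_upwards [eventually_ge_atTop (0:ℝ)] with t ht
    rw [hfc, MM_const ht]
  rw [Filter.limsup_congr hcong]
  have htend : Tendsto (fun t : ℝ => Real.log (Real.log (‖c‖)) / Real.log t)
      atTop (nhds 0) :=
    tendsto_const_nhds.div_atTop Real.tendsto_log_atTop
  exact (EReal.tendsto_coe.2 htend).limsup_eq

lemma tendsto_loglog_div_log :
    Tendsto (fun t : ℝ => Real.log (Real.log t) / Real.log t) atTop (nhds 0) := by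
  have h1 : Tendsto (fun x : ℝ => Real.log x / x) atTop (nhds 0) :=
    Real.isLittleO_log_id_atTop.tendsto_div_nhds_zero
  exact h1.comp Real.tendsto_log_atTop

lemma MMset (f : ℂ → ℂ) (t : ℝ) :
    {x : ℝ | ∃ z : ℂ, ‖z‖ = t ∧ x = ‖f z‖} =
      (fun z => ‖f z‖) '' Metric.sphere (0:ℂ) t := by
  ext x
  simp only [mem_setOf_eq, mem_image, mem_sphere_iff_norm, sub_zero]
  exact ⟨fun ⟨z, h1, h2⟩ => ⟨z, h1, h2.symm⟩, fun ⟨z, h1, h2⟩ => ⟨z, h1, h2.symm⟩⟩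

lemma MM_bdd {f : ℂ → ℂ} (hf : Continuous f) (t : ℝ) :
    BddAbove {x : ℝ | ∃ z : ℂ, ‖z‖ = t ∧ x = ‖f z‖} := by
  rw [MMset]
  exact (isCompact_sphere 0 t).bddAbove_image ((continuous_norm.comp hf).continuousOn)

lemma le_MM {f : ℂ → ℂ} (hf : Continuous f) {t : ℝ} {z : ℂ} (hz : ‖z‖ = t) :
    ‖f z‖ ≤ MM f t :=
  le_csSup (MM_bdd hf t) ⟨z, hz, rfl⟩

lemma MM_nonneg {f : ℂ → ℂ} (hf : Continuous f) {t : ℝ} (ht : 0 ≤ t) : 0 ≤ MM f t := by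
  refine le_trans (norm_nonneg (f t)) (le_MM hf ?_)
  simpa [Complex.norm_real] using abs_of_nonneg ht

lemma MM_le {f : ℂ → ℂ} {t B : ℝ} (ht : 0 ≤ t)
    (h : ∀ z : ℂ, ‖z‖ = t → ‖f z‖ ≤ B) : MM f t ≤ B := by
  refine csSup_le ⟨‖f t‖, t, ?_, rfl⟩ ?_
  · simpa [Complex.norm_real] using abs_of_nonneg ht
  · rintro x ⟨z, hz, rfl⟩; exact h z hz

lemma abs_le_MM_of_le {f : ℂ → ℂ} (hf : Differentiable ℂ f) {t : ℝ} (ht : 0 < t)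
    {z : ℂ} (hz : ‖z‖ ≤ t) : ‖f z‖ ≤ MM f t := by
  have h1 : ∀ w ∈ frontier (Metric.ball (0:ℂ) t), ‖f w‖ ≤ MM f t := by
    intro w hw
    rw [frontier_ball (0:ℂ) ht.ne'] at hw
    rw [mem_sphere_iff_norm, sub_zero] at hw
    exact le_MM hf.continuous hw
  have h2 : z ∈ closure (Metric.ball (0:ℂ) t) := by
    rw [closure_ball (0:ℂ) ht.ne']
    simpa [Metric.mem_closedBall, Complex.dist_eq] using hz
  exact Complex.norm_le_of_forall_mem_frontier_norm_le isBounded_ball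
    (hf.diffContOnCl) h1 h2

lemma growthOrder_nonneg {f : ℂ → ℂ} (hf : Differentiable ℂ f) : 0 ≤ growthOrder f := by
  by_cases hbd : IsBounded (range f)
  · rw [growthOrder_const (fun z => hf.apply_eq_apply_of_bounded hbd z 0)]
  · rw [isBounded_iff_forall_norm_le] at hbd
    push_neg at hbd
    obtain ⟨z0, hz0mem, hz0⟩ := hbd (Real.exp (Real.exp 1))
    obtain ⟨w, rfl⟩ := hz0mem
    have hev : ∀ᶠ t : ℝ in atTop,
        (0:EReal) ≤ ((Real.log (Real.log (MM f t)) / Real.log t : ℝ) : EReal) := by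
      filter_upwards [eventually_ge_atTop (max (‖w‖) 3)] with t ht
      have ht3 : (3:ℝ) ≤ t := le_trans (le_max_right _ _) ht
      have htpos : (0:ℝ) < t := by linarith
      have hMt : Real.exp (Real.exp 1) < MM f t :=
        lt_of_lt_of_le hz0 (abs_le_MM_of_le hf htpos (le_trans (le_max_left _ _) ht))
      have h1 : Real.exp 1 ≤ Real.log (MM f t) := by
        calc Real.exp 1 = Real.log (Real.exp (Real.exp 1)) := (Real.log_exp _).symm
          _ ≤ Real.log (MM f t) := Real.log_le_log (Real.exp_pos _) hMt.le
      have h2 : (1:ℝ) ≤ Real.log (Real.log (MM f t)) := by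
        calc (1:ℝ) = Real.log (Real.exp 1) := (Real.log_exp 1).symm
          _ ≤ Real.log (Real.log (MM f t)) := Real.log_le_log (Real.exp_pos _) h1
      have h3 : (0:ℝ) < Real.log t := by
        have : Real.exp 1 < 3 := by have := Real.exp_one_lt_d9; linarith
        have := Real.log_lt_log (Real.exp_pos 1) (lt_of_lt_of_le this ht3)
        rw [Real.log_exp] at this; linarith
      have : (0:ℝ) ≤ Real.log (Real.log (MM f t)) / Real.log t :=
        div_nonneg (by linarith) h3.le
      exact_mod_cast this
    rw [growthOrder_eq]
    exact Filter.le_limsup_of_frequently_le hev.frequently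

lemma growthOrder_le_of_MM_le {f g : ℂ → ℂ} (hg : Differentiable ℂ g)
    {m : ℕ} (hm : 1 ≤ m) {C : ℝ} (hC : 1 ≤ C)
    (hMf : ∀ᶠ t in atTop, 0 ≤ MM f t)
    (hb : ∀ᶠ t in atTop, MM g t ≤ C * t ^ m * (MM f t + t ^ m)) :
    growthOrder g ≤ max (growthOrder f) 0 := by
  by_cases hbd : IsBounded (range g)
  · rw [growthOrder_const (fun z => hg.apply_eq_apply_of_bounded hbd z 0)]
    exact le_max_right _ _
  -- g unbounded: eventually 1 ≤ MM g t
  have hMg1 : ∀ᶠ t : ℝ in atTop, (1:ℝ) ≤ MM g t := by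
    rw [isBounded_iff_forall_norm_le] at hbd
    push_neg at hbd
    obtain ⟨z0, hz0mem, hz0⟩ := hbd 1
    obtain ⟨w, rfl⟩ := hz0mem
    filter_upwards [eventually_ge_atTop (max (‖w‖) 1)] with t ht
    have htpos : (0:ℝ) < t := lt_of_lt_of_le one_pos (le_trans (le_max_right _ _) ht)
    exact le_trans hz0.le (abs_le_MM_of_le hg htpos (le_trans (le_max_left _ _) ht))
  rw [← EReal.le_of_forall_lt_iff_le]
  intro u hu
  obtain ⟨s, hs1, hs2⟩ := EReal.exists_between_coe_real hu
  have hsu : s < u := by exact_mod_cast hs2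
  have hs0 : (0:ℝ) < s := by
    have : (0:EReal) < (s:EReal) := lt_of_le_of_lt (le_max_right _ _) hs1
    exact_mod_cast this
  have hfs : ∀ᶠ t in atTop, Real.log (Real.log (MM f t)) / Real.log t < s := by
    have : growthOrder f < (s : EReal) := lt_of_le_of_lt (le_max_left _ _) hs1
    rw [growthOrder_eq] at this
    filter_upwards [Filter.eventually_lt_of_limsup_lt this] with t ht
    exact_mod_cast ht
  have hE2 : ∀ᶠ t in atTop, Real.log (Real.log t) / Real.log t ≤ s :=
    (tendsto_loglog_div_log.eventually_lt_const hs0).mono fun t ht => ht.le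
  have hE3 : ∀ᶠ t : ℝ in atTop, Real.log (2 * C) ≤ Real.log t :=
    Real.tendsto_log_atTop.eventually_ge_atTop _
  have hE4 : ∀ᶠ t : ℝ in atTop, Real.log (3 * m) ≤ (u - s) * Real.log t := by
    filter_upwards [Real.tendsto_log_atTop.eventually_ge_atTop
      (Real.log (3 * m) / (u - s))] with t ht
    have h := (div_le_iff₀ (by linarith : (0:ℝ) < u - s)).1 ht
    nlinarith
  have key : ∀ᶠ t in atTop, Real.log (Real.log (MM g t)) / Real.log t ≤ u := by
    filter_upwards [hMf, hb, hfs, hE2, hE3, hE4, eventually_ge_atTop (3:ℝ), hMg1]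
      with t h0f hbt hft h2 h3 h4 h5 hg1
    have hLt : 1 < Real.log t := by
      have he3 : Real.exp 1 < 3 := by have := Real.exp_one_lt_d9; linarith
      have := Real.log_lt_log (Real.exp_pos 1) (lt_of_lt_of_le he3 h5)
      rw [Real.log_exp] at this; linarith
    have hLt0 : (0:ℝ) < Real.log t := by linarith
    rw [div_le_iff₀ hLt0]
    by_cases hneg : Real.log (Real.log (MM g t)) ≤ 0
    · have hu0 : (0:ℝ) < u := lt_trans hs0 hsu
      exact le_trans hneg (le_of_lt (mul_pos hu0 hLt0))
    push_neg at hneg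
    -- positivity setup
    have htpos : (0:ℝ) < t := by linarith
    have hT : (0:ℝ) < t ^ m := pow_pos htpos m
    have hMg0 : (0:ℝ) < MM g t := by linarith
    have hlogMg : 1 < Real.log (MM g t) := by
      by_contra hle
      push_neg at hle
      exact absurd (Real.log_nonpos (Real.log_nonneg hg1) hle) (not_le.2 hneg)
    set X := MM f t with hX
    set L := Real.log t with hL
    have hm1 : (1:ℝ) ≤ (m:ℝ) := by exact_mod_cast hm
    -- step 1: log (MM g t) ≤ log C + m L + log (X + t^m)
    have hXT : (0:ℝ) < X + t ^ m := by linarith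
    have hCT : (0:ℝ) < C * t ^ m := by nlinarith
    have step1 : Real.log (MM g t) ≤ Real.log C + m * L + Real.log (X + t ^ m) := by
      calc Real.log (MM g t) ≤ Real.log (C * t ^ m * (X + t ^ m)) :=
            Real.log_le_log hMg0 hbt
        _ = Real.log C + Real.log (t ^ m) + Real.log (X + t ^ m) := by
            rw [Real.log_mul (ne_of_gt hCT) (ne_of_gt hXT),
              Real.log_mul (by linarith : C ≠ 0) (ne_of_gt hT)]
        _ = Real.log C + m * L + Real.log (X + t ^ m) := by rw [Real.log_pow]
    -- step 2
    have hmaxpos : (0:ℝ) < max X (t ^ m) := lt_of_lt_of_le hT (le_max_right _ _)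
    have step2 : Real.log (X + t ^ m) ≤ Real.log 2 + max (Real.log X) (m * L) := by
      have h1 : X + t ^ m ≤ 2 * max X (t ^ m) := by
        rcases max_cases X (t ^ m) with ⟨he, hle⟩ | ⟨he, hle⟩ <;> rw [he] <;> linarith
      calc Real.log (X + t ^ m) ≤ Real.log (2 * max X (t ^ m)) := Real.log_le_log hXT h1
        _ = Real.log 2 + Real.log (max X (t ^ m)) :=
            Real.log_mul two_ne_zero (ne_of_gt hmaxpos)
        _ ≤ Real.log 2 + max (Real.log X) (m * L) := by
            rcases max_cases X (t ^ m) with ⟨he, _⟩ | ⟨he, _⟩ <;> rw [he]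
            · exact add_le_add_right (le_max_left _ _) _
            · rw [Real.log_pow]; exact add_le_add_right (le_max_right _ _) _
    -- step 3 : log (MM g t) ≤ 3 * m * B with B = max (log X) L
    set B := max (Real.log X) L with hB
    have hBL : L ≤ B := le_max_right _ _
    have hBpos : (0:ℝ) < B := by linarith
    have step3 : Real.log (MM g t) ≤ 3 * m * B := by
      have h2C : Real.log C + Real.log 2 ≤ L := by
        rw [Real.log_mul two_ne_zero (by linarith : C ≠ 0)] at h3
        linarith
      have hmB : B ≤ (m:ℝ) * B := le_mul_of_one_le_left hBpos.le hm1
      have hmLB : (m:ℝ) * L ≤ (m:ℝ) * B := mul_le_mul_of_nonneg_left hBL (by linarith)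
      have hmax1 : max (Real.log X) ((m:ℝ) * L) ≤ (m:ℝ) * B :=
        max_le (le_trans (le_max_left _ L) hmB) hmLB
      have hlogXB : Real.log X ≤ B := le_max_left _ _
      calc Real.log (MM g t) ≤ Real.log C + (m:ℝ) * L + (Real.log 2 + max (Real.log X) ((m:ℝ) * L)) := by
            linarith
        _ ≤ 3 * (m:ℝ) * B := by linarith
    -- step 4: numerator bound
    have h3m : (0:ℝ) < 3 * m := by linarith
    have step4 : Real.log (Real.log (MM g t)) ≤ Real.log (3 * m) + Real.log B := by
      calc Real.log (Real.log (MM g t)) ≤ Real.log (3 * m * B) :=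
            Real.log_le_log (by linarith) step3
        _ = Real.log (3 * m) + Real.log B := Real.log_mul (ne_of_gt h3m) (ne_of_gt hBpos)
    have step5 : Real.log B ≤ max (Real.log (Real.log X)) (Real.log L) := by
      rcases max_cases (Real.log X) L with ⟨he, _⟩ | ⟨he, _⟩ <;> rw [hB, he]
      · exact le_max_left _ _
      · exact le_max_right _ _
    -- final combination
    have hnum1 : Real.log (Real.log X) ≤ s * L := by
      have := hft
      rw [div_lt_iff₀ hLt0] at this
      linarith
    have hnum2 : Real.log L ≤ s * L := by
      have := h2
      rw [div_le_iff₀ hLt0] at this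
      linarith
    have hmaxn : max (Real.log (Real.log X)) (Real.log L) ≤ s * L := max_le hnum1 hnum2
    calc Real.log (Real.log (MM g t)) ≤ Real.log (3 * m) + max (Real.log (Real.log X)) (Real.log L) := by
          linarith
      _ ≤ (u - s) * L + s * L := by linarith
      _ = u * L := by ring
  rw [growthOrder_eq]
  refine Filter.limsup_le_of_le ?_ ?_
  · isBoundedDefault
  · filter_upwards [key] with t ht
    exact_mod_cast ht

lemma poly_upper (P : Polynomial ℂ) :
    ∃ C : ℝ, 1 ≤ C ∧ ∀ z : ℂ, 1 ≤ ‖z‖ →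
      ‖P.eval z‖ ≤ C * (‖z‖) ^ P.natDegree := by
  set n := P.natDegree with hn
  refine ⟨1 + ∑ i ∈ Finset.range (n + 1), ‖P.coeff i‖, by
    have := Finset.sum_nonneg (fun i (_ : i ∈ Finset.range (n+1)) => norm_nonneg (P.coeff i))
    linarith, fun z hz => ?_⟩
  have hz0 : (0:ℝ) ≤ ‖z‖ := norm_nonneg z
  have hzn : (1:ℝ) ≤ ‖z‖ ^ n := one_le_pow₀ hz
  calc ‖P.eval z‖
      ≤ ∑ i ∈ Finset.range (n + 1), ‖P.coeff i * z ^ i‖ := by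
        rw [hn, eval_eq_sum_range z]; exact norm_sum_le _ _
    _ ≤ ∑ i ∈ Finset.range (n + 1), ‖P.coeff i‖ * ‖z‖ ^ n := by
        refine Finset.sum_le_sum fun i hi => ?_
        rw [norm_mul, norm_pow]
        exact mul_le_mul_of_nonneg_left
          (pow_le_pow_right₀ hz (Nat.lt_succ_iff.1 (Finset.mem_range.1 hi))) (norm_nonneg _)
    _ = (∑ i ∈ Finset.range (n + 1), ‖P.coeff i‖) * ‖z‖ ^ n := by
        rw [Finset.sum_mul]
    _ ≤ (1 + ∑ i ∈ Finset.range (n + 1), ‖P.coeff i‖) * ‖z‖ ^ n := by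
        have : (0:ℝ) ≤ ‖z‖ ^ n := by positivity
        nlinarith [Finset.sum_nonneg (fun i (_ : i ∈ Finset.range (n+1)) => norm_nonneg (P.coeff i))]

lemma poly_lower {P : Polynomial ℂ} (hP : P ≠ 0) :
    ∃ c : ℝ, 0 < c ∧ ∃ s : ℝ, ∀ z : ℂ, s ≤ ‖z‖ → c ≤ ‖P.eval z‖ := by
  rcases lt_or_ge 0 P.degree with hd | hd
  · have ht : Tendsto (fun z : ℂ => ‖z‖) (Filter.comap (fun z : ℂ => ‖z‖) atTop) atTop :=
      tendsto_comap
    have h2 := P.tendsto_norm_atTop hd ht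
    have h3 : ∀ᶠ z in Filter.comap (fun z : ℂ => ‖z‖) atTop, 1 ≤ ‖P.eval z‖ :=
      h2.eventually_ge_atTop 1
    rw [Filter.eventually_comap] at h3
    rw [Filter.eventually_atTop] at h3
    obtain ⟨s, hs⟩ := h3
    exact ⟨1, one_pos, s, fun z hz => hs (‖z‖) hz z rfl⟩
  · have hc : P = Polynomial.C (P.coeff 0) := eq_C_of_degree_le_zero hd
    have h0 : P.coeff 0 ≠ 0 := fun h => hP (by rw [hc, h, map_zero])
    refine ⟨‖P.coeff 0‖, by simpa using h0, 0, fun z _ => ?_⟩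
    rw [hc]; simp

lemma diff_dslope {f : ℂ → ℂ} (hf : Differentiable ℂ f) (a : ℂ) :
    Differentiable ℂ (dslope f a) := by
  intro b
  rcases eq_or_ne b a with rfl | hb
  · obtain ⟨p, hp⟩ := hf.analyticAt b
    exact (HasFPowerSeriesAt.analyticAt (hp.has_fpower_series_dslope_fslope)).differentiableAt
  · exact (differentiableAt_dslope_of_ne hb).2 (hf b)

/-- Existence of the decomposition. -/
lemma exist_decomp : ∀ (k : ℕ) (P : Polynomial ℂ), P ≠ 0 → P.natDegree = k →
    ∀ f : ℂ → ℂ, Differentiable ℂ f →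
    ∃ (q : ℂ → ℂ) (R : Polynomial ℂ), Differentiable ℂ q ∧ R.degree < (k : WithBot ℕ) ∧
      ∀ z, f z = P.eval z * q z + R.eval z := by
  intro k
  induction k with
  | zero =>
    intro P hP hk f hf
    have hPc : P = Polynomial.C (P.coeff 0) := eq_C_of_natDegree_eq_zero hk
    have hc : P.coeff 0 ≠ 0 := by
      intro h; exact hP (by rw [hPc, h, map_zero])
    refine ⟨fun z => f z / P.coeff 0, 0, ?_, ?_, ?_⟩
    · exact hf.div_const _
    · simpa [Polynomial.degree_zero] using WithBot.bot_lt_coe 0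
    · intro z
      rw [hPc]
      simp [mul_div_cancel₀ _ hc]
  | succ k ih =>
    intro P hP hk f hf
    have hdeg : 0 < P.degree := by
      rw [Polynomial.degree_eq_natDegree hP, hk]
      exact_mod_cast Nat.succ_pos k
    obtain ⟨a, ha⟩ := Complex.exists_root hdeg
    obtain ⟨Q, hQ⟩ := (Polynomial.dvd_iff_isRoot.2 ha)
    have hQ0 : Q ≠ 0 := by
      rintro rfl; rw [mul_zero] at hQ; exact hP hQ
    have hQdeg : Q.natDegree = k := by
      have h1 : P.natDegree = (X - Polynomial.C a).natDegree + Q.natDegree := by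
        rw [hQ, Polynomial.natDegree_mul (Polynomial.X_sub_C_ne_zero a) hQ0]
      rw [hk, Polynomial.natDegree_X_sub_C] at h1
      omega
    obtain ⟨q, R1, hq, hR1deg, hR1⟩ := ih Q hQ0 hQdeg (dslope f a) (diff_dslope hf a)
    refine ⟨q, Polynomial.C (f a) + (X - Polynomial.C a) * R1, hq, ?_, ?_⟩
    · refine lt_of_le_of_lt (Polynomial.degree_add_le _ _) (max_lt ?_ ?_)
      · exact lt_of_le_of_lt Polynomial.degree_C_le (by exact_mod_cast WithBot.coe_lt_coe.2 (Nat.succ_pos k))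
      · rcases eq_or_ne R1 0 with rfl | hR10
        · simpa using WithBot.bot_lt_coe (k+1)
        · rw [Polynomial.degree_mul, Polynomial.degree_X_sub_C,
            Polynomial.degree_eq_natDegree hR10]
          have : R1.natDegree < k := by
            rwa [← Polynomial.natDegree_lt_iff_degree_lt hR10] at hR1deg
          exact_mod_cast WithBot.coe_lt_coe.2 (by omega : 1 + R1.natDegree < k + 1)
    · intro z
      have hds : (z - a) * dslope f a z = f z - f a := sub_smul_dslope f a z
      have h1 := hR1 z
      rw [hQ]
      simp only [Polynomial.eval_add, Polynomial.eval_mul, Polynomial.eval_sub,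
        Polynomial.eval_X, Polynomial.eval_C]
      have : f z = f a + (z - a) * dslope f a z := by rw [hds]; ring
      rw [this, h1]
      ring

/-- Uniqueness of the decomposition. -/
lemma decomp_unique : ∀ (k : ℕ) (P : Polynomial ℂ), P ≠ 0 → P.natDegree = k →
    ∀ (q : ℂ → ℂ) (R : Polynomial ℂ), Continuous q → R.degree < (k : WithBot ℕ) →
    (∀ z, P.eval z * q z + R.eval z = 0) → (∀ z, q z = 0) ∧ R = 0 := by
  intro k
  induction k with
  | zero =>
    intro P hP hk q R hq hRdeg heq
    have hR0 : R = 0 := by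
      rw [← Polynomial.degree_eq_bot]
      exact Nat.WithBot.lt_zero_iff.1 (by exact_mod_cast hRdeg)
    have hPc : P = Polynomial.C (P.coeff 0) := eq_C_of_natDegree_eq_zero hk
    have hc : P.coeff 0 ≠ 0 := by
      intro h; exact hP (by rw [hPc, h, map_zero])
    refine ⟨fun z => ?_, hR0⟩
    have := heq z
    rw [hR0, hPc] at this
    simp at this
    rcases this with h | h
    · exact absurd h hc
    · exact h
  | succ k ih =>
    intro P hP hk q R hq hRdeg heq
    have hdeg : 0 < P.degree := by
      rw [Polynomial.degree_eq_natDegree hP, hk]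
      exact_mod_cast Nat.succ_pos k
    obtain ⟨a, ha⟩ := Complex.exists_root hdeg
    obtain ⟨Q, hQ⟩ := (Polynomial.dvd_iff_isRoot.2 ha)
    have hQ0 : Q ≠ 0 := by
      rintro rfl; rw [mul_zero] at hQ; exact hP hQ
    have hQdeg : Q.natDegree = k := by
      have h1 : P.natDegree = (X - Polynomial.C a).natDegree + Q.natDegree := by
        rw [hQ, Polynomial.natDegree_mul (Polynomial.X_sub_C_ne_zero a) hQ0]
      rw [hk, Polynomial.natDegree_X_sub_C] at h1
      omega
    -- R vanishes at a
    have hRa : R.IsRoot a := by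
      have := heq a
      rwa [Polynomial.IsRoot.def.1 ha, zero_mul, zero_add] at this
    obtain ⟨R1, hR1⟩ := Polynomial.dvd_iff_isRoot.2 hRa
    have hR1deg : R1.degree < (k : WithBot ℕ) := by
      rcases eq_or_ne R1 0 with rfl | hR10
      · rw [Polynomial.degree_zero]; exact WithBot.bot_lt_coe k
      · have hRne : R ≠ 0 := by
          rw [hR1]
          exact mul_ne_zero (Polynomial.X_sub_C_ne_zero a) hR10
        rw [← Polynomial.natDegree_lt_iff_degree_lt hR10]
        have h2 : R.natDegree = 1 + R1.natDegree := by
          rw [hR1, Polynomial.natDegree_mul (Polynomial.X_sub_C_ne_zero a) hR10,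
            Polynomial.natDegree_X_sub_C]
        have h3 : R.natDegree < k + 1 := by
          rwa [← Polynomial.natDegree_lt_iff_degree_lt hRne] at hRdeg
        omega
    -- the inner function vanishes
    have hinner : ∀ z, Q.eval z * q z + R1.eval z = 0 := by
      have hcont : Continuous fun z => Q.eval z * q z + R1.eval z :=
        ((Q.continuous_aeval.mul hq).add R1.continuous_aeval)
      have hzero : EqOn (fun z => Q.eval z * q z + R1.eval z) (fun _ => (0:ℂ)) {a}ᶜ := by
        intro z hz
        have hza : z - a ≠ 0 := sub_ne_zero.2 hz
        have := heq z
        rw [hQ, hR1] at this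
        simp only [Polynomial.eval_mul, Polynomial.eval_sub, Polynomial.eval_X,
          Polynomial.eval_C] at this
        have h2 : (z - a) * (Q.eval z * q z + R1.eval z) = 0 := by ring_nf; ring_nf at this; linear_combination this
        simpa using (mul_eq_zero.1 h2).resolve_left hza
      have := Continuous.ext_on (dense_compl_singleton a) hcont continuous_const hzero
      intro z
      exact congrFun this z
    obtain ⟨hq0, hR10⟩ := ih Q hQ0 hQdeg q R1 hq hR1deg hinner
    exact ⟨hq0, by rw [hR1, hR10, mul_zero]⟩

lemma iterderiv_eval (k : ℕ) : ∀ (R : Polynomial ℂ),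
    iteratedDeriv k (fun z => R.eval z) = fun z => (Polynomial.derivative^[k] R).eval z := by
  induction k with
  | zero => intro R; simp [iteratedDeriv_zero]
  | succ k ih =>
    intro R
    rw [iteratedDeriv_succ']
    have hd : deriv (fun z => R.eval z) = fun z => R.derivative.eval z :=
      funext fun z => Polynomial.deriv R
    rw [hd, ih R.derivative, Function.iterate_succ_apply]

lemma iterderiv_eval_zero {k : ℕ} {R : Polynomial ℂ} (h : R.degree < (k : WithBot ℕ)) :
    iteratedDeriv k (fun z => R.eval z) = 0 := by
  rw [iterderiv_eval]
  rcases eq_or_ne R 0 with rfl | hR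
  · have h0 : Polynomial.derivative^[k] (0 : Polynomial ℂ) = 0 :=
      Function.iterate_fixed (by simp) k
    rw [h0]; funext z; simp
  · have h0 : Polynomial.derivative^[k] R = 0 :=
      Polynomial.iterate_derivative_eq_zero ((Polynomial.natDegree_lt_iff_degree_lt hR).2 h)
    rw [h0]; funext z; simp

lemma deg_lt_of_iter_deriv_zero : ∀ (k : ℕ) (R : Polynomial ℂ),
    Polynomial.derivative^[k] R = 0 → R.degree < (k : WithBot ℕ) := by
  intro k
  induction k with
  | zero => intro R h; rw [Function.iterate_zero_apply] at h; subst h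
            rw [Polynomial.degree_zero]; exact WithBot.bot_lt_coe 0
  | succ k ih =>
    intro R h
    rw [Function.iterate_succ_apply] at h
    have hder := ih _ h
    rcases eq_or_ne R 0 with rfl | hR
    · rw [Polynomial.degree_zero]; exact WithBot.bot_lt_coe _
    rcases Nat.eq_zero_or_pos R.natDegree with h0 | hpos
    · rw [Polynomial.degree_eq_natDegree hR, h0]
      exact_mod_cast WithBot.coe_lt_coe.2 (Nat.succ_pos k)
    · have hd0 : Polynomial.derivative R ≠ 0 := by
        intro hd
        have := Polynomial.natDegree_eq_zero_of_derivative_eq_zero hd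
        omega
      have h1 : (Polynomial.derivative R).natDegree < k := by
        rwa [← Polynomial.natDegree_lt_iff_degree_lt hd0] at hder
      have h2 : (Polynomial.derivative R).degree = ((R.natDegree - 1 : ℕ) : WithBot ℕ) :=
        Polynomial.degree_derivative_eq R hpos
      have h3 : (Polynomial.derivative R).natDegree = R.natDegree - 1 := by
        rw [Polynomial.natDegree, h2]; rfl
      rw [← Polynomial.natDegree_lt_iff_degree_lt hR]
      omega

lemma antideriv (S : Polynomial ℂ) : ∃ T : Polynomial ℂ, T.derivative = S := by
  induction S using Polynomial.induction_on' with
  | add p q hp hq =>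
    obtain ⟨T1, h1⟩ := hp
    obtain ⟨T2, h2⟩ := hq
    exact ⟨T1 + T2, by rw [Polynomial.derivative_add, h1, h2]⟩
  | monomial n a =>
    refine ⟨Polynomial.C (a / (n + 1)) * X ^ (n + 1), ?_⟩
    rw [Polynomial.derivative_C_mul_X_pow]
    rw [Nat.add_sub_cancel]
    rw [← Polynomial.C_mul_X_pow_eq_monomial]
    congr 1
    have hne : ((n:ℂ)+1) ≠ 0 := Nat.cast_add_one_ne_zero n
    push_cast
    field_simp

lemma poly_of_iter_deriv : ∀ (k : ℕ) (r : ℂ → ℂ), Differentiable ℂ r →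
    iteratedDeriv k r = 0 → ∃ R : Polynomial ℂ, ∀ z, r z = R.eval z := by
  intro k
  induction k with
  | zero =>
    intro r _ h
    rw [iteratedDeriv_zero] at h
    exact ⟨0, fun z => by rw [h]; simp⟩
  | succ k ih =>
    intro r hr h
    rw [iteratedDeriv_succ'] at h
    have hdr : Differentiable ℂ (deriv r) := by
      intro z
      have han : AnalyticOnNhd ℂ r univ := fun w _ => hr.analyticAt w
      exact ((han.deriv z (mem_univ z)).differentiableAt)
    obtain ⟨S, hS⟩ := ih (deriv r) hdr h
    obtain ⟨T, hT⟩ := antideriv S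
    refine ⟨T + Polynomial.C (r 0 - T.eval 0), fun z => ?_⟩
    have hconst : ∀ x y : ℂ, (fun w => r w - (T + Polynomial.C (r 0 - T.eval 0)).eval w) x =
        (fun w => r w - (T + Polynomial.C (r 0 - T.eval 0)).eval w) y := by
      apply is_const_of_deriv_eq_zero
      · exact hr.sub (Polynomial.differentiable _)
      · intro x
        have hdiff : DifferentiableAt ℂ (fun w => (T + Polynomial.C (r 0 - T.eval 0)).eval w) x :=
          (Polynomial.differentiable _).differentiableAt
        rw [deriv_fun_sub (hr x) hdiff]
        have h2 : deriv (fun w => (T + Polynomial.C (r 0 - T.eval 0)).eval w) x =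
            (T + Polynomial.C (r 0 - T.eval 0)).derivative.eval x := Polynomial.deriv _
        rw [h2, hS x]
        rw [Polynomial.derivative_add, Polynomial.derivative_C, add_zero, hT]
        ring
    have := hconst z 0
    simp only [Polynomial.eval_add, Polynomial.eval_C] at this ⊢
    have h0 : r 0 - (T.eval 0 + (r 0 - T.eval 0)) = 0 := by ring
    rw [h0] at this
    exact sub_eq_zero.1 this

/-- Fischer pair in dimension 1: for a nonzero polynomial P of degree k with
leading part P_k (so that P_k*(D) r = 0 means the k-th derivative of r vanishes),
every entire f decomposes uniquely as f = P q + r with entire q, r and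
iteratedDeriv k r = 0; moreover r is a polynomial of degree < k and q has the
same order as f. -/
theorem stmt17 (P : Polynomial ℂ) (hP : P ≠ 0) (k : ℕ) (hk : P.natDegree = k)
    (f : ℂ → ℂ) (hf : Differentiable ℂ f) :
    (∃! qr : (ℂ → ℂ) × (ℂ → ℂ),
        Differentiable ℂ qr.1 ∧ Differentiable ℂ qr.2 ∧
        (∀ z, f z = P.eval z * qr.1 z + qr.2 z) ∧ iteratedDeriv k qr.2 = 0) ∧
    (∀ q r : ℂ → ℂ, Differentiable ℂ q → Differentiable ℂ r →
      (∀ z, f z = P.eval z * q z + r z) → iteratedDeriv k r = 0 →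
      (∃ R : Polynomial ℂ, R.degree < (k : WithBot ℕ) ∧ ∀ z, r z = R.eval z) ∧
      growthOrder q = growthOrder f) := by
  obtain ⟨q0, R0, hq0, hR0deg, hR0⟩ := exist_decomp k P hP hk f hf
  -- a helper to extract the polynomial from any admissible remainder
  have poly_extract : ∀ r : ℂ → ℂ, Differentiable ℂ r → iteratedDeriv k r = 0 →
      ∃ R : Polynomial ℂ, R.degree < (k : WithBot ℕ) ∧ ∀ z, r z = R.eval z := by
    intro r hr hit
    obtain ⟨R, hR⟩ := poly_of_iter_deriv k r hr hit
    have hfun : (fun z => R.eval z) = r := funext fun z => (hR z).symm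
    have hit2 : iteratedDeriv k (fun z => R.eval z) = 0 := by rw [hfun]; exact hit
    rw [iterderiv_eval] at hit2
    have hD : Polynomial.derivative^[k] R = 0 := by
      apply Polynomial.funext
      intro z
      have := congrFun hit2 z
      simpa using this
    exact ⟨R, deg_lt_of_iter_deriv_zero k R hD, hR⟩
  constructor
  · refine ⟨(q0, fun z => R0.eval z),
      ⟨hq0, Polynomial.differentiable R0, hR0, iterderiv_eval_zero hR0deg⟩, ?_⟩
    rintro ⟨q', r'⟩ ⟨hq', hr', heq', hit'⟩
    obtain ⟨R', hR'deg, hR'⟩ := poly_extract r' hr' hit'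
    have huniq := decomp_unique k P hP hk (fun z => q' z - q0 z) (R' - R0)
      (hq'.continuous.sub hq0.continuous)
      (lt_of_le_of_lt (Polynomial.degree_sub_le _ _) (max_lt hR'deg hR0deg))
      (fun z => by
        have h1 : f z = P.eval z * q' z + r' z := heq' z
        have h2 := hR0 z
        rw [hR' z] at h1
        show P.eval z * (q' z - q0 z) + (R' - R0).eval z = 0
        rw [Polynomial.eval_sub]
        linear_combination h2 - h1)
    have hqeq : q' = q0 := funext fun z => sub_eq_zero.1 (huniq.1 z)
    have hReq : R' = R0 := sub_eq_zero.1 huniq.2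
    have hreq : r' = fun z => R0.eval z := funext fun z => by rw [hR' z, hReq]
    exact Prod.ext hqeq hreq
  · intro q r hq hr heq hiter
    obtain ⟨R, hRdeg, hR⟩ := poly_extract r hr hiter
    refine ⟨⟨R, hRdeg, hR⟩, ?_⟩
    -- growth order equality
    obtain ⟨C1, hC1, hC1b⟩ := poly_upper P
    obtain ⟨C2, hC2, hC2b⟩ := poly_upper R
    obtain ⟨c, hc, s, hsb⟩ := poly_lower hP
    set m := max (max P.natDegree R.natDegree) 1 with hm
    have hm1 : 1 ≤ m := le_max_right _ _
    have heqR : ∀ z, f z = P.eval z * q z + R.eval z := fun z => by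
      rw [heq z, hR z]
    -- direction 1 : MM f ≤ stuff * MM q
    have h1 : ∀ᶠ t in atTop, MM f t ≤ (C1 + C2) * t ^ m * (MM q t + t ^ m) := by
      filter_upwards [eventually_ge_atTop (1:ℝ)] with t ht
      have ht0 : (0:ℝ) ≤ t := by linarith
      have htm : (1:ℝ) ≤ t ^ m := one_le_pow₀ ht
      have hMq : 0 ≤ MM q t := MM_nonneg hq.continuous ht0
      refine MM_le ht0 fun z hz => ?_
      have hz1 : 1 ≤ ‖z‖ := by rw [hz]; exact ht
      have e1 : ‖f z‖ ≤
          ‖P.eval z‖ * ‖q z‖ + ‖R.eval z‖ := by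
        rw [heqR z]
        calc ‖P.eval z * q z + R.eval z‖
            ≤ ‖P.eval z * q z‖ + ‖R.eval z‖ :=
              norm_add_le _ _
          _ = ‖P.eval z‖ * ‖q z‖ + ‖R.eval z‖ := by
              rw [norm_mul]
      have e2 : ‖P.eval z‖ ≤ C1 * t ^ m := by
        calc ‖P.eval z‖ ≤ C1 * ‖z‖ ^ P.natDegree := hC1b z hz1
          _ = C1 * t ^ P.natDegree := by rw [hz]
          _ ≤ C1 * t ^ m :=
              mul_le_mul_of_nonneg_left
                (pow_le_pow_right₀ ht (le_sup_left.trans le_sup_left : P.natDegree ≤ m))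
                (by linarith)
      have e3 : ‖R.eval z‖ ≤ C2 * t ^ m := by
        calc ‖R.eval z‖ ≤ C2 * ‖z‖ ^ R.natDegree := hC2b z hz1
          _ = C2 * t ^ R.natDegree := by rw [hz]
          _ ≤ C2 * t ^ m :=
              mul_le_mul_of_nonneg_left
                (pow_le_pow_right₀ ht (le_sup_right.trans le_sup_left : R.natDegree ≤ m))
                (by linarith)
      have e4 : ‖q z‖ ≤ MM q t := le_MM hq.continuous hz
      have habs : 0 ≤ ‖q z‖ := norm_nonneg _
      have hP0 : 0 ≤ ‖P.eval z‖ := norm_nonneg _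
      calc ‖f z‖
          ≤ ‖P.eval z‖ * ‖q z‖ + ‖R.eval z‖ := e1
        _ ≤ (C1 * t ^ m) * MM q t + C2 * t ^ m := by nlinarith
        _ ≤ (C1 + C2) * t ^ m * (MM q t + t ^ m) := by
            have b1 : 0 ≤ t ^ m := by linarith
            have b2 : 0 ≤ C2 * t ^ m := by nlinarith
            have b3 : 0 ≤ C2 * t ^ m * MM q t := mul_nonneg b2 hMq
            have b4 : (C1 + C2) * t ^ m * 1 ≤ (C1 + C2) * t ^ m * t ^ m :=
              mul_le_mul_of_nonneg_left htm (by nlinarith)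
            nlinarith
    -- direction 2 : MM q ≤ stuff * MM f
    have h2 : ∀ᶠ t in atTop, MM q t ≤ ((1 + C2) / c + 1) * t ^ m * (MM f t + t ^ m) := by
      filter_upwards [eventually_ge_atTop (max s 1)] with t ht
      have ht1 : (1:ℝ) ≤ t := le_trans (le_max_right _ _) ht
      have hts : s ≤ t := le_trans (le_max_left _ _) ht
      have ht0 : (0:ℝ) ≤ t := by linarith
      have htm : (1:ℝ) ≤ t ^ m := one_le_pow₀ ht1
      have hMf0 : 0 ≤ MM f t := MM_nonneg hf.continuous ht0
      refine MM_le ht0 fun z hz => ?_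
      have hz1 : 1 ≤ ‖z‖ := by rw [hz]; exact ht1
      have hPlow : c ≤ ‖P.eval z‖ := hsb z (by rw [hz]; exact hts)
      have hPne : P.eval z ≠ 0 := by
        intro h0; rw [h0] at hPlow; simp at hPlow; linarith
      have hqz : q z = (f z - R.eval z) / P.eval z := by
        field_simp
        linear_combination -(heqR z)
      have e3 : ‖R.eval z‖ ≤ C2 * t ^ m := by
        calc ‖R.eval z‖ ≤ C2 * ‖z‖ ^ R.natDegree := hC2b z hz1
          _ = C2 * t ^ R.natDegree := by rw [hz]
          _ ≤ C2 * t ^ m :=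
              mul_le_mul_of_nonneg_left
                (pow_le_pow_right₀ ht1 (le_sup_right.trans le_sup_left : R.natDegree ≤ m))
                (by linarith)
      have e4 : ‖f z‖ ≤ MM f t := le_MM hf.continuous hz
      have enum : ‖f z - R.eval z‖ ≤ MM f t + C2 * t ^ m := by
        calc ‖f z - R.eval z‖
            ≤ ‖f z‖ + ‖R.eval z‖ := norm_sub_le _ _
          _ ≤ MM f t + C2 * t ^ m := by linarith
      have e5 : ‖q z‖ ≤ (MM f t + C2 * t ^ m) / c := by
        rw [hqz, norm_div]
        apply div_le_div₀ (by positivity) enum hc hPlow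
      calc ‖q z‖ ≤ (MM f t + C2 * t ^ m) / c := e5
        _ ≤ ((1 + C2) / c + 1) * t ^ m * (MM f t + t ^ m) := by
            rw [div_le_iff₀ hc]
            have hRHS : ((1 + C2) / c + 1) * t ^ m * (MM f t + t ^ m) * c =
                (1 + C2 + c) * (t ^ m * MM f t + t ^ m * t ^ m) := by
              field_simp
            rw [hRHS]
            have htm0 : (0:ℝ) ≤ t ^ m := by linarith
            have a1 : MM f t ≤ t ^ m * MM f t := le_mul_of_one_le_left hMf0 htm
            have a2 : t ^ m ≤ t ^ m * t ^ m := le_mul_of_one_le_left (by linarith) htm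
            have a3 : 0 ≤ t ^ m * MM f t := mul_nonneg htm0 hMf0
            have a4 : C2 * t ^ m ≤ C2 * (t ^ m * t ^ m) :=
              mul_le_mul_of_nonneg_left a2 (by linarith)
            nlinarith
    have hCq1 : (1:ℝ) ≤ (1 + C2) / c + 1 := by
      have : 0 < (1 + C2) / c := by positivity
      linarith
    have hCf1 : (1:ℝ) ≤ C1 + C2 := by linarith
    have hMMq0 : ∀ᶠ t : ℝ in atTop, 0 ≤ MM q t := by
      filter_upwards [eventually_ge_atTop (0:ℝ)] with t ht
      exact MM_nonneg hq.continuous ht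
    have hMMf0 : ∀ᶠ t : ℝ in atTop, 0 ≤ MM f t := by
      filter_upwards [eventually_ge_atTop (0:ℝ)] with t ht
      exact MM_nonneg hf.continuous ht
    have kA : growthOrder q ≤ max (growthOrder f) 0 :=
      growthOrder_le_of_MM_le hq hm1 hCq1 hMMf0 h2
    have kB : growthOrder f ≤ max (growthOrder q) 0 :=
      growthOrder_le_of_MM_le hf hm1 hCf1 hMMq0 h1
    rw [max_eq_left (growthOrder_nonneg hf)] at kA
    rw [max_eq_left (growthOrder_nonneg hq)] at kB
    exact le_antisymm kA kB
end
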